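/- arXiv:1102.0958 — 5 statements merged into one kernel-verified Lean document; each statement's English description precedes it below -/
import Mathlib

section
/- Assume F(0) ≠ ∅. Then the following statements are equivalent: (i) σ(0) satisfies the strong Slater condition; (ii) 0 ∈ int(dom F), where dom F = {p ∈ l_∞(T) : F(p) ≠ ∅}; (iii) F is Lipschitz-like around (0, x) for every x ∈ F(0); (iv) (0, 0) ∉ cl* H(0); (v) (0, 0) ∉ cl* C(0). -/
open Filter
open scoped ENNReal

noncomputable section

/-- The Banach space `l_∞(T)` of bounded real functions on `T` with sup norm. -/
abbrev Linf (T : Type*) : Type _ := lp (fun _ : T => ℝ) ∞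

/-- The Dirac evaluation functional `δ_t ∈ l_∞(T)*`. -/
def dirac (T : Type*) (t : T) : Linf T →L[ℝ] ℝ :=
  LinearMap.mkContinuous
    { toFun := fun p => p t
      map_add' := fun p q => by simp [lp.coeFn_add]
      map_smul' := fun c p => by simp [lp.coeFn_smul] }
    1 (fun p => by rw [one_mul]; exact lp.norm_apply_le_norm ENNReal.top_ne_zero p t)

variable {X : Type*} [NormedAddCommGroup X] [NormedSpace ℝ X]

/-- Fenchel conjugate of an extended-real-valued function. -/
def conj (g : X → EReal) (u : X →L[ℝ] ℝ) : EReal :=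
  ⨆ x : X, (u x : EReal) - g x

/-- `dom g* = {u* : g*(u*) < +∞}`. -/
def domConj (g : X → EReal) : Set (X →L[ℝ] ℝ) := {u | conj g u < ⊤}

/-- `gph g* = {(u*, g*(u*)) : u* ∈ dom g*}`. -/
def gphConj (g : X → EReal) : Set ((X →L[ℝ] ℝ) × ℝ) :=
  {q | conj g q.1 = (q.2 : EReal)}

/-- `epi g* = {(u*, γ) : g*(u*) ≤ γ}`. -/
def epiConj (g : X → EReal) : Set ((X →L[ℝ] ℝ) × ℝ) :=
  {q | conj g q.1 ≤ (q.2 : EReal)}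

/-- A proper extended-real-valued function: never `⊥`, not identically `⊤`. -/
def ErealProper (g : X → EReal) : Prop := (∀ x, g x ≠ ⊥) ∧ ∃ x, g x ≠ ⊤

/-- Convexity of an extended-real-valued function. -/
def ErealConvexOn (g : X → EReal) : Prop :=
  ∀ x y : X, ∀ a b : ℝ, 0 ≤ a → 0 ≤ b → a + b = 1 →
    g (a • x + b • y) ≤ (a : EReal) * g x + (b : EReal) * g y

variable {T : Type*}

/-- The feasible solution map `F(p) = {x : f_t(x) ≤ p_t ∀ t}`. -/
def feas (f : T → X → EReal) (p : Linf T) : Set X :=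
  {x | ∀ t, f t x ≤ ((p t : ℝ) : EReal)}

/-- The graph of the feasible solution map. -/
def feasGraph (f : T → X → EReal) : Set (Linf T × X) :=
  {q | q.2 ∈ feas f q.1}

/-- Lipschitz-like (Aubin) property of a set-valued map (given by its graph `G`)
around `(z̄, ȳ) ∈ G` with modulus `ℓ`. -/
def LipLike {Z Y : Type*} [NormedAddCommGroup Z] [NormedAddCommGroup Y]
    (G : Set (Z × Y)) (zb : Z) (yb : Y) (ℓ : ℝ) : Prop :=
  ∃ U ∈ nhds zb, ∃ V ∈ nhds yb, ∀ z ∈ U, ∀ u ∈ U, ∀ y ∈ V,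
    (z, y) ∈ G → ∃ y', (u, y') ∈ G ∧ ‖y - y'‖ ≤ ℓ * ‖z - u‖

/-- The exact Lipschitzian bound `lip G(z̄, ȳ)` (value `∞` if the map is not
Lipschitz-like around `(z̄, ȳ)`). -/
def lipBound {Z Y : Type*} [NormedAddCommGroup Z] [NormedAddCommGroup Y]
    (G : Set (Z × Y)) (zb : Z) (yb : Y) : ℝ≥0∞ :=
  sInf {c : ℝ≥0∞ | ∃ ℓ : ℝ, 0 ≤ ℓ ∧ LipLike G zb yb ℓ ∧ c = ENNReal.ofReal ℓ}

/-- Coderivative of a convex-graph map `G` at `(0, ȳ)`: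
`z* ∈ D*G(0, ȳ)(y*)` iff `⟨z*, z⟩ − ⟨y*, y⟩ ≤ −⟨y*, ȳ⟩` for all `(z, y) ∈ G`. -/
def coderivMem {Z Y : Type*} [NormedAddCommGroup Z] [NormedSpace ℝ Z]
    [NormedAddCommGroup Y] [NormedSpace ℝ Y]
    (G : Set (Z × Y)) (yb : Y) (ys : Y →L[ℝ] ℝ) (zs : Z →L[ℝ] ℝ) : Prop :=
  ∀ q ∈ G, zs q.1 - ys q.2 ≤ - ys yb

/-- The coderivative norm `‖D*G(0, ȳ)‖ = sup{‖z*‖ : z* ∈ D*G(0, ȳ)(y*), ‖y*‖ ≤ 1}`. -/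
def coderivNorm {Z Y : Type*} [NormedAddCommGroup Z] [NormedSpace ℝ Z]
    [NormedAddCommGroup Y] [NormedSpace ℝ Y]
    (G : Set (Z × Y)) (yb : Y) : ℝ≥0∞ :=
  ⨆ zs ∈ {zs : Z →L[ℝ] ℝ | ∃ ys : Y →L[ℝ] ℝ, ‖ys‖ ≤ 1 ∧ coderivMem G yb ys zs},
    (‖zs‖₊ : ℝ≥0∞)

/-- Weak* closure of a subset of `X* × ℝ`. -/
def wclosure2 (S : Set ((X →L[ℝ] ℝ) × ℝ)) : Set ((X →L[ℝ] ℝ) × ℝ) :=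
  {q | ((StrongDual.toWeakDual q.1 : WeakDual ℝ X), q.2) ∈
    closure ((fun w : (X →L[ℝ] ℝ) × ℝ =>
      ((StrongDual.toWeakDual w.1 : WeakDual ℝ X), w.2)) '' S)}

/-- Weak* closure of a subset of `l_∞(T)* × X* × ℝ` (the dual of `l_∞(T) × X × ℝ`). -/
def wclosure3 (S : Set ((Linf T →L[ℝ] ℝ) × ((X →L[ℝ] ℝ) × ℝ))) :
    Set ((Linf T →L[ℝ] ℝ) × ((X →L[ℝ] ℝ) × ℝ)) :=
  {q | ((StrongDual.toWeakDual q.1 : WeakDual ℝ (Linf T)),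
        ((StrongDual.toWeakDual q.2.1 : WeakDual ℝ X), q.2.2)) ∈
    closure ((fun w : (Linf T →L[ℝ] ℝ) × ((X →L[ℝ] ℝ) × ℝ) =>
      ((StrongDual.toWeakDual w.1 : WeakDual ℝ (Linf T)),
        ((StrongDual.toWeakDual w.2.1 : WeakDual ℝ X), w.2.2))) '' S)}

/-- Convex conic hull. -/
def coneHull {V : Type*} [AddCommMonoid V] [Module ℝ V] (S : Set V) : Set V :=
  {x | ∃ r : ℝ, 0 ≤ r ∧ ∃ y ∈ convexHull ℝ S, x = r • y}

/-- `C(p) = co(⋃ₜ gph (f_t − p_t)*)`. -/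
def Cset (f : T → X → EReal) (p : Linf T) : Set ((X →L[ℝ] ℝ) × ℝ) :=
  convexHull ℝ (⋃ t : T, gphConj (fun x => f t x - ((p t : ℝ) : EReal)))

/-- `H(p) = co(⋃ₜ epi (f_t − p_t)*)`. -/
def Hset (f : T → X → EReal) (p : Linf T) : Set ((X →L[ℝ] ℝ) × ℝ) :=
  convexHull ℝ (⋃ t : T, epiConj (fun x => f t x - ((p t : ℝ) : EReal)))

/-- Strong Slater condition for `σ(p)`. -/
def SSC (f : T → X → EReal) (p : Linf T) : Prop :=
  ∃ xh : X, (⨆ t : T, (f t xh - ((p t : ℝ) : EReal))) < 0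

/-- `x̂` is a strong Slater point for `σ(0)`. -/
def StrongSlaterPt (f : T → X → EReal) (xh : X) : Prop :=
  (⨆ t : T, f t xh) < 0


variable {X : Type*} [NormedAddCommGroup X] [NormedSpace ℝ X] {T : Type*}

/-- The index set `T̃ = {(t, u*) : u* ∈ dom f_t*}` of the linearized system. -/
def Ttilde (f : T → X → EReal) : Type _ :=
  {s : T × (X →L[ℝ] ℝ) // s.2 ∈ domConj (f s.1)}

/-- The linearized feasible solution map `F̃(ρ)`. -/
def feasTilde (f : T → X → EReal) (ρ : Linf (Ttilde f)) : Set X :=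
  {x | ∀ s : Ttilde f, ((s.1.2 x : ℝ) : EReal) - conj (f s.1.1) s.1.2 ≤ ((ρ s : ℝ) : EReal)}

/-- The embedding `p ↦ ρ_p`, `ρ_p(t, u*) = p_t`. -/
def rhoP (f : T → X → EReal) (p : Linf T) : Linf (Ttilde f) :=
  ⟨fun s => p s.1.1, memℓp_infty
    ⟨‖p‖, by rintro r ⟨s, rfl⟩; exact lp.norm_apply_le_norm ENNReal.top_ne_zero p s.1.1⟩⟩

/-- The subdifferential of convex analysis of `g` at `x`. -/
def subdiff (g : X → EReal) (x : X) : Set (X →L[ℝ] ℝ) :=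
  {u | ∀ y, ((u y - u x : ℝ) : EReal) ≤ g y - g x}

end



section Helpers
set_option linter.unusedSectionVars false
set_option maxHeartbeats 1000000
variable {X : Type*} [NormedAddCommGroup X] [NormedSpace ℝ X]

namespace Scratch

/-- the real epigraph -/
def Epi (g : X → EReal) : Set (X × ℝ) := {q | g q.1 ≤ (q.2 : EReal)}

lemma epi_closed {g : X → EReal} (hlsc : LowerSemicontinuous g) : IsClosed (Epi g) := by
  rw [← isOpen_compl_iff]
  rw [isOpen_iff_mem_nhds]
  rintro ⟨x, μ⟩ hq
  simp only [Set.mem_compl_iff, Epi, Set.mem_setOf_eq, not_le] at hq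
  obtain ⟨r, hr1, hr2⟩ := exists_between hq
  lift r to ℝ using ⟨ne_top_of_lt hr2, ne_bot_of_gt hr1⟩
  have h1 := hlsc x _ hr2
  rw [mem_nhds_prod_iff]
  refine ⟨{x' | (r : EReal) < g x'}, h1, Set.Iio r, Iio_mem_nhds (by exact_mod_cast hr1), ?_⟩
  rintro ⟨x', μ'⟩ ⟨hx', hμ'⟩
  simp only [Set.mem_compl_iff, Epi, Set.mem_setOf_eq, not_le]
  exact lt_trans (by exact_mod_cast hμ') hx'

lemma epi_convex {g : X → EReal} (hconv : ErealConvexOn g) : Convex ℝ (Epi g) := by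
  rintro ⟨x, μ⟩ hx ⟨y, ν⟩ hy a b ha hb hab
  simp only [Epi, Set.mem_setOf_eq] at *
  calc g (a • x + b • y) ≤ (a : EReal) * g x + (b : EReal) * g y := hconv x y a b ha hb hab
    _ ≤ (a : EReal) * (μ : EReal) + (b : EReal) * (ν : EReal) := by
        exact add_le_add (mul_le_mul_of_nonneg_left hx (EReal.coe_nonneg.mpr ha))
            (mul_le_mul_of_nonneg_left hy (EReal.coe_nonneg.mpr hb))
    _ = ((a * μ + b * ν : ℝ) : EReal) := by push_cast; rfl

lemma conj_lower {g : X → EReal} (u : X →L[ℝ] ℝ) (x : X) :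
    (u x : EReal) - g x ≤ conj g u := le_iSup (fun x => (u x : EReal) - g x) x

lemma real_of_proper {g : X → EReal} (hproper : ErealProper g) {x : X} (hx : g x ≠ ⊤) :
    ∃ m : ℝ, g x = (m : EReal) := by
  cases hgx : g x with
  | bot => exact absurd hgx (hproper.1 x)
  | coe m => exact ⟨m, rfl⟩
  | top => exact absurd hgx hx

/-- separation at a point outside the epigraph -/
lemma sep_epi {g : X → EReal} (hproper : ErealProper g) (hlsc : LowerSemicontinuous g)
    (hconv : ErealConvexOn g) {y : X} {c : ℝ} (h : ¬ g y ≤ (c : EReal)) :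
    ∃ (u : X →L[ℝ] ℝ) (s α : ℝ), s ≤ 0 ∧ (∀ x : X, ∀ μ : ℝ, g x ≤ (μ : EReal) → u x + s * μ < α) ∧
      α < u y + s * c := by
  have hmem : ((y, c) : X × ℝ) ∉ Epi g := h
  obtain ⟨f, α, hf1, hf2⟩ := geometric_hahn_banach_closed_point
    (epi_convex hconv) (epi_closed hlsc) hmem
  set u : X →L[ℝ] ℝ := f.comp (ContinuousLinearMap.inl ℝ X ℝ) with hu
  set s : ℝ := f (0, 1) with hs
  have hdec : ∀ (x : X) (μ : ℝ), f (x, μ) = u x + s * μ := by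
    intro x μ
    have : ((x, μ) : X × ℝ) = (x, 0) + μ • ((0 : X), (1 : ℝ)) := by
      simp [Prod.ext_iff]
    rw [this, map_add, map_smul]
    simp [hu, hs, mul_comm]
  obtain ⟨x₀, hx₀⟩ := hproper.2
  obtain ⟨m, hm⟩ := real_of_proper hproper hx₀
  have hsle : s ≤ 0 := by
    by_contra hpos
    push_neg at hpos
    obtain ⟨n, hn⟩ := exists_nat_gt ((α - u x₀ - s * m) / s)
    have hmem : ((x₀, m + n) : X × ℝ) ∈ Epi g := by
      simp only [Epi, Set.mem_setOf_eq, hm]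
      exact_mod_cast le_add_of_nonneg_right (by positivity)
    have := hf1 _ hmem
    rw [hdec] at this
    rw [div_lt_iff₀ hpos] at hn
    nlinarith
  refine ⟨u, s, α, hsle, ?_, by rw [← hdec]; exact hf2⟩
  intro x μ hxμ
  have := hf1 (x, μ) hxμ
  rwa [hdec] at this

/-- existence of a continuous affine minorant -/
lemma exists_minorant {g : X → EReal} (hproper : ErealProper g) (hlsc : LowerSemicontinuous g)
    (hconv : ErealConvexOn g) :
    ∃ (v : X →L[ℝ] ℝ) (β : ℝ), ∀ x : X, (v x : EReal) - g x ≤ (β : EReal) := by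
  obtain ⟨x₀, hx₀⟩ := hproper.2
  obtain ⟨m, hm⟩ := real_of_proper hproper hx₀
  have hnot : ¬ g x₀ ≤ ((m - 1 : ℝ) : EReal) := by
    rw [hm]; exact_mod_cast by linarith
  obtain ⟨u, s, α, hs0, hsep, hpt⟩ := sep_epi hproper hlsc hconv hnot
  have hsneg : s < 0 := by
    rcases lt_or_eq_of_le hs0 with h | h
    · exact h
    · exfalso
      have h1 := hsep x₀ m hm.le
      rw [h] at h1 hpt
      simp only [zero_mul, add_zero] at h1 hpt
      linarith
  have hinv : (0:ℝ) < (-s)⁻¹ := by rw [inv_pos]; linarith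
  have hss : (-s)⁻¹ * (-s) = 1 := inv_mul_cancel₀ (by linarith)
  refine ⟨(-s)⁻¹ • u, α / (-s), ?_⟩
  intro x
  cases hgx : g x with
  | bot => exact absurd hgx (hproper.1 x)
  | top => simp
  | coe μ =>
    have h1 := hsep x μ hgx.le
    have h2 : (-s)⁻¹ * u x - μ ≤ α / (-s) := by
      have hsne : (-s) ≠ 0 := by linarith
      have e1 : (u x + s * μ) * (-s)⁻¹ ≤ α * (-s)⁻¹ :=
        mul_le_mul_of_nonneg_right h1.le hinv.le
      have hms : s * (-s)⁻¹ = -1 := by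
        have h' : (-s) * (-s)⁻¹ = 1 := mul_inv_cancel₀ hsne
        have h'' : (-s) * (-s)⁻¹ = -(s * (-s)⁻¹) := by ring
        linarith
      have e2 : (u x + s * μ) * (-s)⁻¹ = (-s)⁻¹ * u x - μ := by
        linear_combination μ * hms
      rw [div_eq_mul_inv]
      linarith
    calc ((((-s)⁻¹ • u) x : ℝ) : EReal) - (μ : EReal)
        = (((-s)⁻¹ * u x - μ : ℝ) : EReal) := by
          simp only [ContinuousLinearMap.smul_apply, smul_eq_mul]; norm_cast
      _ ≤ ((α / (-s) : ℝ) : EReal) := by exact_mod_cast h2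

/-- minorant in conj form -/
lemma conj_le_of_minorant {g : X → EReal} {v : X →L[ℝ] ℝ} {β : ℝ}
    (h : ∀ x : X, (v x : EReal) - g x ≤ (β : EReal)) : conj g v ≤ (β : EReal) :=
  iSup_le h

/-- Fenchel–Moreau type bound: if all affine functions built from the conjugate
are bounded by `c` at `y`, then `g y ≤ c`. -/
lemma fenchel_moreau {g : X → EReal} (hproper : ErealProper g) (hlsc : LowerSemicontinuous g)
    (hconv : ErealConvexOn g) (y : X) (c : ℝ)
    (h : ∀ (u : X →L[ℝ] ℝ) (β : ℝ), conj g u ≤ (β : EReal) → u y - β ≤ c) :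
    g y ≤ (c : EReal) := by
  by_contra hc
  obtain ⟨u, s, α, hs0, hsep, hpt⟩ := sep_epi hproper hlsc hconv hc
  rcases lt_or_eq_of_le hs0 with hsneg | hszero
  · -- s < 0
    have hinv : (0:ℝ) < (-s)⁻¹ := by rw [inv_pos]; linarith
    have hss : (-s)⁻¹ * (-s) = 1 := inv_mul_cancel₀ (by linarith)
    have hconj : conj g ((-s)⁻¹ • u) ≤ ((α / (-s) : ℝ) : EReal) := by
      apply iSup_le
      intro x
      cases hgx : g x with
      | bot => exact absurd hgx (hproper.1 x)
      | top => simp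
      | coe μ =>
        have h1 := hsep x μ hgx.le
        have h2 : (-s)⁻¹ * u x - μ ≤ α / (-s) := by
          have hsne : (-s) ≠ 0 := by linarith
          have e1 : (u x + s * μ) * (-s)⁻¹ ≤ α * (-s)⁻¹ :=
            mul_le_mul_of_nonneg_right h1.le hinv.le
          have hms : s * (-s)⁻¹ = -1 := by
            have h' : (-s) * (-s)⁻¹ = 1 := mul_inv_cancel₀ hsne
            have h'' : (-s) * (-s)⁻¹ = -(s * (-s)⁻¹) := by ring
            linarith
          have e2 : (u x + s * μ) * (-s)⁻¹ = (-s)⁻¹ * u x - μ := by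
            linear_combination μ * hms
          rw [div_eq_mul_inv]
          linarith
        calc ((((-s)⁻¹ • u) x : ℝ) : EReal) - (μ : EReal)
            = (((-s)⁻¹ * u x - μ : ℝ) : EReal) := by
              simp only [ContinuousLinearMap.smul_apply, smul_eq_mul]; norm_cast
          _ ≤ ((α / (-s) : ℝ) : EReal) := by exact_mod_cast h2
    have h3 := h _ _ hconj
    simp only [ContinuousLinearMap.smul_apply, smul_eq_mul] at h3
    rw [div_eq_mul_inv] at h3
    have hsne : (-s) ≠ 0 := by linarith
    have e1 : α * (-s)⁻¹ < (u y + s * c) * (-s)⁻¹ := mul_lt_mul_of_pos_right hpt hinv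
    have hms : s * (-s)⁻¹ = -1 := by
      have h' : (-s) * (-s)⁻¹ = 1 := mul_inv_cancel₀ hsne
      have h'' : (-s) * (-s)⁻¹ = -(s * (-s)⁻¹) := by ring
      linarith
    have e2 : (u y + s * c) * (-s)⁻¹ = (-s)⁻¹ * u y - c := by
      linear_combination c * hms
    linarith
  · -- s = 0
    rw [hszero] at hsep hpt
    simp only [zero_mul, add_zero] at hsep hpt
    obtain ⟨v, β, hv⟩ := exists_minorant hproper hlsc hconv
    have key : ∀ n : ℕ, conj g (v + (n : ℝ) • u) ≤ ((β + n * α : ℝ) : EReal) := by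
      intro n
      apply iSup_le
      intro x
      cases hgx : g x with
      | bot => exact absurd hgx (hproper.1 x)
      | top => simp
      | coe μ =>
        have h1 : u x < α := hsep x μ hgx.le
        have h2 : (v x : EReal) - (μ : EReal) ≤ (β : EReal) := by rw [← hgx]; exact hv x
        have h2' : v x - μ ≤ β := by exact_mod_cast h2
        have h3 : v x + n * u x - μ ≤ β + n * α := by
          have : (n:ℝ) * u x ≤ n * α := by
            apply mul_le_mul_of_nonneg_left h1.le (Nat.cast_nonneg n)
          linarith
        calc (((v + (n:ℝ) • u) x : ℝ) : EReal) - (μ : EReal)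
            = ((v x + n * u x - μ : ℝ) : EReal) := by
              simp only [ContinuousLinearMap.add_apply, ContinuousLinearMap.smul_apply,
                smul_eq_mul]; norm_cast
          _ ≤ ((β + n * α : ℝ) : EReal) := by exact_mod_cast h3
    have hlarge : ∀ n : ℕ, (n : ℝ) * (u y - α) ≤ c + β - v y := by
      intro n
      have h4 := h _ _ (key n)
      simp only [ContinuousLinearMap.add_apply, ContinuousLinearMap.smul_apply,
        smul_eq_mul] at h4
      linarith
    obtain ⟨n, hn⟩ := exists_nat_gt ((c + β - v y) / (u y - α))
    have hpos : 0 < u y - α := by linarith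
    rw [div_lt_iff₀ hpos] at hn
    exact absurd (hlarge n) (by linarith)

lemma basic_nhd {W : Set (WeakDual ℝ X × ℝ)} (hW : W ∈ nhds ((0 : WeakDual ℝ X), (0 : ℝ))) :
    ∃ (s : Finset X) (ε : ℝ), 0 < ε ∧ ∀ (v : WeakDual ℝ X) (γ : ℝ),
      (∀ x ∈ s, |v x| < ε) → |γ| < ε → (v, γ) ∈ W := by
  rw [mem_nhds_prod_iff] at hW
  obtain ⟨U, hU, V, hV, hUV⟩ := hW
  have hind : (nhds (0 : WeakDual ℝ X)) =
      Filter.comap (fun (v : WeakDual ℝ X) => (fun x => v x : X → ℝ))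
        (nhds (fun _ => (0 : ℝ))) := by
    have h := nhds_induced (fun (v : WeakDual ℝ X) => (fun x => v x : X → ℝ))
      (0 : WeakDual ℝ X)
    exact h
  rw [hind, Filter.mem_comap] at hU
  obtain ⟨P, hP, hPU⟩ := hU
  rw [nhds_pi, Filter.mem_pi] at hP
  obtain ⟨I, hIfin, t, ht, hsub⟩ := hP
  have hch : ∀ i : X, ∃ ε : ℝ, 0 < ε ∧ Metric.ball (0:ℝ) ε ⊆ t i := by
    intro i
    exact Metric.mem_nhds_iff.mp (ht i)
  choose εf hεf hball using hch
  obtain ⟨δ, hδ, hδV⟩ := Metric.mem_nhds_iff.mp hV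
  have hSne : (insert (1:ℝ) ((hIfin.toFinset).image εf)).Nonempty :=
    ⟨1, Finset.mem_insert_self _ _⟩
  have hε₀pos : 0 < (insert (1:ℝ) ((hIfin.toFinset).image εf)).min' hSne := by
    rcases Finset.mem_insert.mp ((insert (1:ℝ) ((hIfin.toFinset).image εf)).min'_mem hSne)
      with h | h
    · rw [h]; norm_num
    · obtain ⟨i, _, hi⟩ := Finset.mem_image.mp h
      rw [← hi]; exact hεf i
  set s : Finset X := hIfin.toFinset
  set ε₀ : ℝ := (insert (1:ℝ) ((hIfin.toFinset).image εf)).min' hSne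
  refine ⟨s, min δ ε₀, lt_min hδ hε₀pos, ?_⟩
  intro v γ hv hγ
  apply hUV
  constructor
  · apply hPU
    apply hsub
    intro i hi
    have his : i ∈ s := hIfin.mem_toFinset.mpr hi
    apply hball i
    rw [Metric.mem_ball, Real.dist_eq, sub_zero]
    calc |v i| < min δ ε₀ := hv i his
      _ ≤ ε₀ := min_le_right _ _
      _ ≤ εf i := Finset.min'_le _ _ (Finset.mem_insert_of_mem (Finset.mem_image_of_mem _ his))
  · apply hδV
    rw [Metric.mem_ball, Real.dist_eq, sub_zero]
    exact lt_of_lt_of_le hγ (min_le_left _ _)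

lemma sep_findim (s : Finset X) (ε : ℝ) (hε : 0 < ε) (H : Set ((X →L[ℝ] ℝ) × ℝ))
    (hconv : Convex ℝ H)
    (hdisj : ∀ q ∈ H, ¬ ((∀ x ∈ s, |q.1 x| < ε) ∧ |q.2| < ε)) :
    ∃ (x : X) (r δ : ℝ), 0 < δ ∧ ∀ q ∈ H, δ < q.1 x + r * q.2 := by
  classical
  set Φ : ((X →L[ℝ] ℝ) × ℝ) →ₗ[ℝ] ((↥s → ℝ) × ℝ) :=
    { toFun := fun q => (fun i => q.1 i.1, q.2)
      map_add' := by intro q q'; ext i <;> simp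
      map_smul' := by intro c q; ext i <;> simp } with hΦ
  set A : Set ((↥s → ℝ) × ℝ) := closure (Φ '' H) with hA
  have hAconv : Convex ℝ A := (hconv.linear_image Φ).closure
  have hAsub : A ⊆ {a | ε ≤ ‖a‖} := by
    apply closure_minimal
    · rintro a ⟨q, hq, rfl⟩
      have this2 := hdisj q hq
      have this : (∀ x ∈ s, |q.1 x| < ε) → ¬ |q.2| < ε := fun h1 h2 => this2 ⟨h1, h2⟩
      rcases le_or_gt ε |q.2| with h | h
      · calc ε ≤ |q.2| := h
          _ = ‖(Φ q).2‖ := by simp [hΦ, Real.norm_eq_abs]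
          _ ≤ ‖Φ q‖ := norm_snd_le _
      · have h2 : ¬ ∀ x ∈ s, |q.1 x| < ε := fun hh => this hh h
        push_neg at h2
        obtain ⟨x, hx, hxe⟩ := h2
        calc ε ≤ |q.1 x| := hxe
          _ = ‖(Φ q).1 ⟨x, hx⟩‖ := by simp [hΦ, Real.norm_eq_abs]
          _ ≤ ‖(Φ q).1‖ := norm_le_pi_norm _ _
          _ ≤ ‖Φ q‖ := norm_fst_le _
    · exact isClosed_le continuous_const continuous_norm
  have h0A : (0 : (↥s → ℝ) × ℝ) ∉ A := by
    intro h0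
    have := hAsub h0
    simp only [Set.mem_setOf_eq, norm_zero] at this
    linarith
  obtain ⟨ψ, δ0, hψ0, hψA⟩ := geometric_hahn_banach_point_closed hAconv isClosed_closure h0A
  rw [map_zero] at hψ0
  refine ⟨∑ i : ↥s, ψ (Pi.single i 1, 0) • (i : X), ψ (0, 1), δ0, hψ0, ?_⟩
  intro q hq
  have hΦq : Φ q ∈ A := subset_closure (Set.mem_image_of_mem _ hq)
  have hval := hψA _ hΦq
  have hdecomp : ψ (Φ q) = q.1 (∑ i : ↥s, ψ (Pi.single i 1, 0) • (i : X)) + ψ (0,1) * q.2 := by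
    have e1 : (Φ q : (↥s → ℝ) × ℝ) = (fun i => q.1 i.1, (0:ℝ)) + q.2 • ((0 : ↥s → ℝ), (1:ℝ)) := by
      ext i <;> simp [hΦ]
    have hfun : (fun i : ↥s => q.1 ↑i) = ∑ i : ↥s, (q.1 ↑i) • (Pi.single i (1:ℝ) : ↥s → ℝ) := by
      have h1 : ∀ i : ↥s, (q.1 ↑i) • (Pi.single i (1:ℝ) : ↥s → ℝ) = Pi.single i (q.1 ↑i) := by
        intro i; rw [← Pi.single_smul, smul_eq_mul, mul_one]
      rw [Finset.sum_congr rfl (fun i _ => h1 i),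
        Finset.univ_sum_single (fun i : ↥s => q.1 ↑i)]
    have e2 : ((fun i => q.1 i.1, (0:ℝ)) : (↥s → ℝ) × ℝ)
        = ∑ i : ↥s, (q.1 i.1) • ((Pi.single i 1 : ↥s → ℝ), (0:ℝ)) := by
      rw [Prod.ext_iff]
      constructor
      · simp only [Prod.fst_sum, Prod.smul_mk]
        exact hfun
      · simp [Prod.snd_sum]
    rw [e1, map_add, map_smul, e2, map_sum]
    rw [map_sum q.1 (fun i : ↥s => ψ (Pi.single i 1, 0) • (i : X)) Finset.univ]
    simp only [map_smul, smul_eq_mul]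
    congr 1
    · exact Finset.sum_congr rfl (fun i _ => mul_comm _ _)
    · exact mul_comm _ _
  rw [hdecomp] at hval
  exact hval

/-- every point of the epi-hull has a companion in the gph-hull with controlled height -/
lemma companion {T : Type*} {f : T → X → EReal} (hproper : ∀ t, ErealProper (f t))
    {x₀ : X} (hx₀ : ∀ t, f t x₀ ≤ 0) :
    ∀ q ∈ convexHull ℝ (⋃ t, epiConj (f t)), ∃ γ' : ℝ,
      (q.1, γ') ∈ convexHull ℝ (⋃ t, gphConj (f t)) ∧ γ' ≤ q.2 ∧ q.1 x₀ ≤ γ' := by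
  have hsub : convexHull ℝ (⋃ t, epiConj (f t)) ⊆
      {q : (X →L[ℝ] ℝ) × ℝ | ∃ γ' : ℝ,
        (q.1, γ') ∈ convexHull ℝ (⋃ t, gphConj (f t)) ∧ γ' ≤ q.2 ∧ q.1 x₀ ≤ γ'} := by
    apply convexHull_min
    · rintro q' hq'
      rw [Set.mem_iUnion] at hq'
      obtain ⟨t, hq't⟩ := hq'
      have hq't' : conj (f t) q'.1 ≤ ((q'.2 : ℝ) : EReal) := hq't
      have hstep : ((q'.1 x₀ : ℝ) : EReal) - 0 ≤ ((q'.1 x₀ : ℝ) : EReal) - f t x₀ :=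
        EReal.sub_le_sub (le_refl _) (hx₀ t)
      rw [sub_zero] at hstep
      have hlow : ((q'.1 x₀ : ℝ) : EReal) ≤ conj (f t) q'.1 :=
        le_trans hstep (conj_lower q'.1 x₀)
      have hne_top : conj (f t) q'.1 ≠ ⊤ :=
        ne_top_of_le_ne_top (EReal.coe_ne_top q'.2) hq't'
      have hne_bot : conj (f t) q'.1 ≠ ⊥ := by
        intro h
        rw [h] at hlow
        exact absurd hlow (by simp)
      have hγ' : conj (f t) q'.1 = (((conj (f t) q'.1).toReal : ℝ) : EReal) :=
        (EReal.coe_toReal hne_top hne_bot).symm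
      refine ⟨(conj (f t) q'.1).toReal,
        subset_convexHull _ _ (Set.mem_iUnion.mpr ⟨t, hγ'⟩), ?_, ?_⟩
      · have h2 := hq't'
        rw [hγ'] at h2
        exact_mod_cast h2
      · have h2 := hlow
        rw [hγ'] at h2
        exact_mod_cast h2
    · rintro q1 ⟨γ1, hg1, hle1, hlow1⟩ q2 ⟨γ2, hg2, hle2, hlow2⟩ a b ha hb hab
      refine ⟨a * γ1 + b * γ2, ?_, ?_, ?_⟩
      · have hmem := (convex_convexHull ℝ (⋃ t, gphConj (f t))) hg1 hg2 ha hb hab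
        have heq : a • ((q1.1, γ1) : (X →L[ℝ] ℝ) × ℝ) + b • (q2.1, γ2)
            = ((a • q1 + b • q2).1, a * γ1 + b * γ2) := by
          apply Prod.ext
          · simp
          · simp [smul_eq_mul]
        rwa [heq] at hmem
      · have e2 : (a • q1 + b • q2).2 = a * q1.2 + b * q2.2 := by simp [smul_eq_mul]
        rw [e2]
        nlinarith
      · have e1 : (a • q1 + b • q2).1 x₀ = a * q1.1 x₀ + b * q2.1 x₀ := by simp
        rw [e1]
        nlinarith
  intro q hq
  exact hsub hq

end Scratch

def cstLinf {T : Type*} (c : ℝ) : Linf T :=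
  ⟨fun _ => c, memℓp_infty ⟨|c|, by rintro r ⟨t, rfl⟩; exact le_of_eq (Real.norm_eq_abs c)⟩⟩

lemma cstLinf_apply {T : Type*} (c : ℝ) (t : T) : (cstLinf c : Linf T) t = c := rfl

lemma norm_cstLinf_le {T : Type*} (c : ℝ) : ‖(cstLinf c : Linf T)‖ ≤ |c| :=
  lp.norm_le_of_forall_le (abs_nonneg c) fun _ => le_of_eq (Real.norm_eq_abs c)

end Helpers

set_option maxHeartbeats 2000000 in
theorem stmt_11 {T : Type*} [Nonempty T]
    {X : Type*} [NormedAddCommGroup X] [NormedSpace ℝ X] [CompleteSpace X]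
    (f : T → X → EReal)
    (hproper : ∀ t, ErealProper (f t))
    (hlsc : ∀ t, LowerSemicontinuous (f t))
    (hconv : ∀ t, ErealConvexOn (f t))
    (hne : (feas f (0 : Linf T)).Nonempty) :
    [ SSC f 0,
      (0 : Linf T) ∈ interior {p : Linf T | (feas f p).Nonempty},
      ∀ x ∈ feas f (0 : Linf T), ∃ ℓ : ℝ, 0 ≤ ℓ ∧ LipLike (feasGraph f) 0 x ℓ,
      ((0 : X →L[ℝ] ℝ), (0 : ℝ)) ∉ wclosure2 (Hset f 0),
      ((0 : X →L[ℝ] ℝ), (0 : ℝ)) ∉ wclosure2 (Cset f 0) ].TFAE := by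
  classical
  -- basic simplifications about the zero perturbation
  have hzt : ∀ t : T, (((0 : Linf T) t : ℝ) : EReal) = 0 := by
    intro t
    have : (0 : Linf T) t = 0 := by rw [lp.coeFn_zero]; rfl
    rw [this]; rfl
  have hfun0 : ∀ t : T, (fun x : X => f t x - (((0 : Linf T) t : ℝ) : EReal)) = f t := by
    intro t; funext x; rw [hzt t, sub_zero]
  have hfeas0 : ∀ x : X, x ∈ feas f 0 ↔ ∀ t, f t x ≤ 0 := by
    intro x
    constructor
    · intro h t; have := h t; rwa [hzt t] at this
    · intro h t; rw [hzt t]; exact h t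
  -- packaging of the strong Slater condition
  have sscElim : SSC f 0 → ∃ (xh : X) (c : ℝ), c < 0 ∧ ∀ t, f t xh ≤ (c : EReal) := by
    rintro ⟨xh, hxh⟩
    have hxh' : (⨆ t : T, f t xh) < 0 := by
      simpa only [hzt, sub_zero] using hxh
    obtain ⟨c', h1, h2⟩ := exists_between hxh'
    have t0 : T := Classical.arbitrary T
    have hbot : (⊥ : EReal) < c' := by
      refine lt_of_lt_of_le ?_ (le_trans (le_iSup (fun s => f s xh) t0) h1.le)
      exact Ne.bot_lt ((hproper t0).1 xh)
    lift c' to ℝ using ⟨ne_top_of_lt h2, hbot.ne'⟩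
    refine ⟨xh, c', by exact_mod_cast h2, fun t => le_trans (le_iSup (fun s => f s xh) t) h1.le⟩
  have sscIntro : ∀ (xh : X) (c : ℝ), c < 0 → (∀ t, f t xh ≤ (c : EReal)) → SSC f 0 := by
    intro xh c hc h
    refine ⟨xh, ?_⟩
    have : (⨆ t : T, (f t xh - (((0 : Linf T) t : ℝ) : EReal))) ≤ (c : EReal) := by
      apply iSup_le
      intro t
      rw [hzt t, sub_zero]
      exact h t
    exact lt_of_le_of_lt this (by exact_mod_cast hc)
  have happ : ∀ (p : Linf T) (t : T), |p t| ≤ ‖p‖ := by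
    intro p t
    have h := lp.norm_apply_le_norm (E := fun _ : T => ℝ) ENNReal.top_ne_zero p t
    rwa [Real.norm_eq_abs] at h
  tfae_have 1 → 2 := by
    intro h1
    obtain ⟨xh, c, hc, hxc⟩ := sscElim h1
    rw [mem_interior]
    refine ⟨Metric.ball 0 (-c), ?_, Metric.isOpen_ball, Metric.mem_ball_self (by linarith)⟩
    intro p hp
    refine ⟨xh, fun t => ?_⟩
    have hpt : |p t| ≤ ‖p‖ := happ p t
    have hpn : ‖p‖ < -c := by rwa [Metric.mem_ball, dist_zero_right] at hp
    have hle : c ≤ p t := by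
      have := (abs_le.mp hpt).1
      linarith
    exact le_trans (hxc t) (by exact_mod_cast hle)
  tfae_have 2 → 1 := by
    intro h2
    have hm : {p : Linf T | (feas f p).Nonempty} ∈ nhds (0 : Linf T) :=
      mem_interior_iff_mem_nhds.mp h2
    obtain ⟨ε, hε, hball⟩ := Metric.mem_nhds_iff.mp hm
    have hmem : (cstLinf (-(ε/2)) : Linf T) ∈ Metric.ball (0 : Linf T) ε := by
      rw [Metric.mem_ball, dist_zero_right]
      calc ‖(cstLinf (-(ε/2)) : Linf T)‖ ≤ |(-(ε/2))| := norm_cstLinf_le _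
        _ < ε := by rw [abs_neg, abs_of_pos (by linarith)]; linarith
    obtain ⟨y, hy⟩ := hball hmem
    apply sscIntro y (-(ε/2)) (by linarith)
    intro t
    have h := hy t
    rwa [cstLinf_apply] at h
  tfae_have 1 → 3 := by
    intro h1 x hx
    obtain ⟨xh, c, hc, hxc⟩ := sscElim h1
    have hepos : (0:ℝ) < -c := by linarith
    refine ⟨2 * (1 + ‖x - xh‖) / (-c), by positivity, Metric.ball 0 ((-c)/4),
      Metric.ball_mem_nhds _ (by linarith), Metric.ball x 1, Metric.ball_mem_nhds _ one_pos, ?_⟩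
    intro p hp q hq y hy hpy
    set lam : ℝ := 2 * ‖p - q‖ / (-c) with hlam
    have hlam0 : 0 ≤ lam := by positivity
    have hpn : ‖p‖ < (-c)/4 := by
      have h' := Metric.mem_ball.mp hp; rwa [dist_zero_right] at h'
    have hqn : ‖q‖ < (-c)/4 := by
      have h' := Metric.mem_ball.mp hq; rwa [dist_zero_right] at h'
    have hpq : ‖p - q‖ < (-c)/2 := by
      calc ‖p - q‖ ≤ ‖p‖ + ‖q‖ := norm_sub_le _ _
        _ < (-c)/2 := by linarith
    have hlam1 : lam < 1 := by
      rw [hlam, div_lt_one hepos]; linarith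
    refine ⟨(1 - lam) • y + lam • xh, ?_, ?_⟩
    · show ∀ t, f t ((1 - lam) • y + lam • xh) ≤ ((q t : ℝ) : EReal)
      intro t
      have hconv' := hconv t y xh (1 - lam) lam (by linarith) hlam0 (by ring)
      have hfy : f t y ≤ ((p t : ℝ) : EReal) := hpy t
      have hb1 : ((1 - lam : ℝ) : EReal) * f t y
          ≤ ((1 - lam : ℝ) : EReal) * ((p t : ℝ) : EReal) :=
        mul_le_mul_of_nonneg_left hfy (by exact_mod_cast (by linarith : (0:ℝ) ≤ 1 - lam))
      have hb2 : ((lam : ℝ) : EReal) * f t xh ≤ ((lam : ℝ) : EReal) * ((c : ℝ) : EReal) :=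
        mul_le_mul_of_nonneg_left (hxc t) (by exact_mod_cast hlam0)
      have hreal : (1 - lam) * p t + lam * c ≤ q t := by
        have habs : |p t - q t| ≤ ‖p - q‖ := by
          have h' := happ (p - q) t
          rwa [lp.coeFn_sub, Pi.sub_apply] at h'
        have hq1 : p t - q t ≤ ‖p - q‖ := (abs_le.mp habs).2
        have hpt : -((-c)/4) ≤ p t := by
          have h' := (abs_le.mp (happ p t)).1
          linarith
        have hkey : ‖p - q‖ ≤ lam * (p t + (-c)) := by
          have h5 : (-c)/2 ≤ p t + (-c) := by linarith
          have h6 : lam * ((-c)/2) ≤ lam * (p t + (-c)) := mul_le_mul_of_nonneg_left h5 hlam0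
          have h7 : lam * ((-c)/2) = ‖p - q‖ := by
            rw [hlam, div_mul_eq_mul_div, div_eq_iff (ne_of_gt hepos)]; ring
          linarith
        nlinarith [hkey, hq1]
      calc f t ((1 - lam) • y + lam • xh)
          ≤ ((1 - lam : ℝ) : EReal) * f t y + ((lam : ℝ) : EReal) * f t xh := hconv'
        _ ≤ ((1 - lam : ℝ) : EReal) * ((p t : ℝ) : EReal)
            + ((lam : ℝ) : EReal) * ((c : ℝ) : EReal) := add_le_add hb1 hb2
        _ = (((1 - lam) * p t + lam * c : ℝ) : EReal) := by push_cast; rfl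
        _ ≤ ((q t : ℝ) : EReal) := by exact_mod_cast hreal
    · have hyy : y - ((1 - lam) • y + lam • xh) = lam • (y - xh) := by
        rw [smul_sub, sub_smul, one_smul]
        abel
      rw [hyy, norm_smul, Real.norm_eq_abs, abs_of_nonneg hlam0]
      have hyx : ‖y - xh‖ ≤ 1 + ‖x - xh‖ := by
        have h8 : ‖y - x‖ < 1 := by
          have h' := Metric.mem_ball.mp hy; rwa [dist_eq_norm] at h'
        have h9 : y - xh = (y - x) + (x - xh) := by abel
        calc ‖y - xh‖ = ‖(y - x) + (x - xh)‖ := by rw [← h9]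
          _ ≤ ‖y - x‖ + ‖x - xh‖ := norm_add_le _ _
          _ ≤ 1 + ‖x - xh‖ := by linarith
      calc lam * ‖y - xh‖ ≤ lam * (1 + ‖x - xh‖) := mul_le_mul_of_nonneg_left hyx hlam0
        _ = 2 * (1 + ‖x - xh‖) / (-c) * ‖p - q‖ := by
            rw [hlam]; ring
  tfae_have 3 → 1 := by
    intro h3
    obtain ⟨x, hx⟩ := hne
    obtain ⟨ℓ, hℓ, U, hU, V, hV, himp⟩ := h3 x hx
    obtain ⟨ε, hε, hball⟩ := Metric.mem_nhds_iff.mp hU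
    have hu : (cstLinf (-(ε/2)) : Linf T) ∈ U := by
      apply hball
      rw [Metric.mem_ball, dist_zero_right]
      calc ‖(cstLinf (-(ε/2)) : Linf T)‖ ≤ |(-(ε/2))| := norm_cstLinf_le _
        _ < ε := by rw [abs_neg, abs_of_pos (by linarith)]; linarith
    obtain ⟨y', hy', -⟩ := himp 0 (mem_of_mem_nhds hU) _ hu x (mem_of_mem_nhds hV) hx
    apply sscIntro y' (-(ε/2)) (by linarith)
    intro t
    have h := hy' t
    rwa [cstLinf_apply] at h
  tfae_have 1 → 4 := by
    intro h1
    obtain ⟨xh, c, hc, hxc⟩ := sscElim h1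
    intro hmem
    have hH : ∀ q ∈ Hset f 0, q.1 xh - q.2 ≤ c := by
      intro q hq
      have hsub : Hset f 0 ⊆ {q : (X →L[ℝ] ℝ) × ℝ | q.1 xh - q.2 ≤ c} := by
        apply convexHull_min
        · apply Set.iUnion_subset
          intro t q' hq'
          have hq'' : conj (f t) q'.1 ≤ ((q'.2 : ℝ) : EReal) := by
            rw [← hfun0 t]; exact hq'
          have h1 : ((q'.1 xh : ℝ) : EReal) - (c : EReal) ≤ ((q'.2 : ℝ) : EReal) := by
            refine le_trans ?_ hq''
            refine le_trans ?_ (Scratch.conj_lower q'.1 xh)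
            exact EReal.sub_le_sub (le_refl _) (hxc t)
          have h2 : q'.1 xh - c ≤ q'.2 := by exact_mod_cast h1
          simp only [Set.mem_setOf_eq]
          linarith
        · intro q1 h1 q2 h2 a b ha hb hab
          simp only [Set.mem_setOf_eq] at *
          have e1 : (a • q1 + b • q2).1 xh = a * q1.1 xh + b * q2.1 xh := by
            simp [Prod.fst_add, Prod.smul_fst]
          have e2 : (a • q1 + b • q2).2 = a * q1.2 + b * q2.2 := by
            simp [Prod.snd_add, Prod.smul_snd, smul_eq_mul]
          rw [e1, e2]
          nlinarith
      exact hsub hq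
    have hKclosed : IsClosed {q : WeakDual ℝ X × ℝ | q.1 xh - q.2 ≤ c} := by
      apply isClosed_le _ continuous_const
      exact ((WeakBilin.eval_continuous _ xh).comp continuous_fst).sub continuous_snd
    have himg : (fun w : (X →L[ℝ] ℝ) × ℝ =>
        ((StrongDual.toWeakDual w.1 : WeakDual ℝ X), w.2)) '' (Hset f 0)
        ⊆ {q : WeakDual ℝ X × ℝ | q.1 xh - q.2 ≤ c} := by
      rintro _ ⟨q, hq, rfl⟩
      exact hH q hq
    have h0 := (closure_minimal himg hKclosed) hmem
    change (0 : WeakDual ℝ X) xh - 0 ≤ c at h0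
    have h00 : (0 : WeakDual ℝ X) xh = 0 := rfl
    rw [h00] at h0
    linarith
  tfae_have 4 → 5 := by
    intro h4 hmem
    apply h4
    have hsub : Cset f 0 ⊆ Hset f 0 :=
      convexHull_mono (Set.iUnion_mono fun t q hq => le_of_eq hq)
    simp only [wclosure2, Set.mem_setOf_eq] at hmem ⊢
    exact closure_mono (Set.image_mono hsub) hmem
  tfae_have 5 → 4 := by
    intro h5 hmemH
    apply h5
    obtain ⟨x₀, hx₀⟩ := hne
    have hx₀' : ∀ t, f t x₀ ≤ 0 := (hfeas0 x₀).mp hx₀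
    have hHeq : Hset f 0 = convexHull ℝ (⋃ t, epiConj (f t)) := by
      rw [Hset]
      congr 1
      exact Set.iUnion_congr fun t => by rw [hfun0 t]
    have hCeq : Cset f 0 = convexHull ℝ (⋃ t, gphConj (f t)) := by
      rw [Cset]
      congr 1
      exact Set.iUnion_congr fun t => by rw [hfun0 t]
    simp only [wclosure2, Set.mem_setOf_eq] at hmemH ⊢
    rw [mem_closure_iff] at hmemH ⊢
    intro O hO haO
    have hpt : ((StrongDual.toWeakDual (0 : X →L[ℝ] ℝ) : WeakDual ℝ X), (0:ℝ))
        = ((0 : WeakDual ℝ X), (0:ℝ)) := by rw [map_zero]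
    have hOnhds : O ∈ nhds ((0 : WeakDual ℝ X), (0:ℝ)) := by
      apply hO.mem_nhds
      rwa [hpt] at haO
    obtain ⟨s, ε, hε, hcyl⟩ := Scratch.basic_nhd hOnhds
    classical
    set s' : Finset X := insert x₀ s with hs'
    set O' : Set (WeakDual ℝ X × ℝ) := {w | (∀ x ∈ s', |w.1 x| < ε) ∧ |w.2| < ε} with hO'
    have hO'open : IsOpen O' := by
      have heq : O' = (⋂ x ∈ s', {w : WeakDual ℝ X × ℝ | |w.1 x| < ε}) ∩
          {w : WeakDual ℝ X × ℝ | |w.2| < ε} := by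
        ext w
        simp [hO', Set.mem_iInter]
      rw [heq]
      refine IsOpen.inter ?_ ?_
      · apply isOpen_biInter_finset
        intro x _
        have hc : Continuous fun w : WeakDual ℝ X × ℝ => |w.1 x| :=
          ((WeakBilin.eval_continuous _ x).comp continuous_fst).abs
        exact isOpen_lt hc continuous_const
      · exact isOpen_lt (continuous_snd.abs) continuous_const
    have haO' : ((StrongDual.toWeakDual (0 : X →L[ℝ] ℝ) : WeakDual ℝ X), (0:ℝ)) ∈ O' := by
      rw [hpt]
      constructor
      · intro x _
        show |(0 : WeakDual ℝ X) x| < ε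
        have : (0 : WeakDual ℝ X) x = 0 := rfl
        rw [this, abs_zero]
        exact hε
      · show |(0:ℝ)| < ε
        rw [abs_zero]; exact hε
    obtain ⟨w, hwO', hwimg⟩ := hmemH O' hO'open haO'
    obtain ⟨q, hqH, rfl⟩ := hwimg
    have hqH' : q ∈ convexHull ℝ (⋃ t, epiConj (f t)) := by rwa [hHeq] at hqH
    obtain ⟨γ', hγ'C, hγ'le, hγ'low⟩ := Scratch.companion hproper hx₀' q hqH'
    have hw1 : ∀ x ∈ s', |q.1 x| < ε := hwO'.1
    have hw2 : |q.2| < ε := hwO'.2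
    refine ⟨((StrongDual.toWeakDual q.1 : WeakDual ℝ X), γ'), ?_, ?_⟩
    · apply hcyl
      · intro x hx
        exact hw1 x (Finset.mem_insert_of_mem hx)
      · rw [abs_lt]
        have hx₀mem : |q.1 x₀| < ε := hw1 x₀ (Finset.mem_insert_self _ _)
        have h1 : -ε < q.1 x₀ := (abs_lt.mp hx₀mem).1
        have h2 : q.2 < ε := (abs_lt.mp hw2).2
        constructor <;> linarith
    · exact ⟨(q.1, γ'), by rw [hCeq]; exact hγ'C, rfl⟩
  tfae_have 4 → 1 := by
    intro h4
    obtain ⟨x₀, hx₀⟩ := hne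
    have hx₀' : ∀ t, f t x₀ ≤ 0 := (hfeas0 x₀).mp hx₀
    have hHeq : Hset f 0 = convexHull ℝ (⋃ t, epiConj (f t)) := by
      rw [Hset]
      congr 1
      exact Set.iUnion_congr fun t => by rw [hfun0 t]
    simp only [wclosure2, Set.mem_setOf_eq] at h4
    have hWopen : IsOpen (closure ((fun w : (X →L[ℝ] ℝ) × ℝ =>
        ((StrongDual.toWeakDual w.1 : WeakDual ℝ X), w.2)) '' Hset f 0))ᶜ :=
      isClosed_closure.isOpen_compl
    have hptW : ((0 : WeakDual ℝ X), (0:ℝ)) ∈ (closure ((fun w : (X →L[ℝ] ℝ) × ℝ =>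
        ((StrongDual.toWeakDual w.1 : WeakDual ℝ X), w.2)) '' Hset f 0))ᶜ := by
      have hpt : ((StrongDual.toWeakDual (0 : X →L[ℝ] ℝ) : WeakDual ℝ X), (0:ℝ))
          = ((0 : WeakDual ℝ X), (0:ℝ)) := by rw [map_zero]
      rw [← hpt]
      exact h4
    obtain ⟨s, ε, hε, hcyl⟩ := Scratch.basic_nhd (hWopen.mem_nhds hptW)
    have hdisj : ∀ q ∈ Hset f 0, ¬ ((∀ x ∈ s, |q.1 x| < ε) ∧ |q.2| < ε) := by
      rintro q hq ⟨hq1, hq2⟩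
      have hmem : ((StrongDual.toWeakDual q.1 : WeakDual ℝ X), q.2) ∈
          closure ((fun w : (X →L[ℝ] ℝ) × ℝ =>
            ((StrongDual.toWeakDual w.1 : WeakDual ℝ X), w.2)) '' Hset f 0) :=
        subset_closure (Set.mem_image_of_mem _ hq)
      have hnot := hcyl (StrongDual.toWeakDual q.1) q.2 hq1 hq2
      exact hnot hmem
    obtain ⟨x, r, δ, hδ, hsep⟩ := Scratch.sep_findim s ε hε (Hset f 0)
      (convex_convexHull ℝ _) hdisj
    have hepi : ∀ (t : T) (u : X →L[ℝ] ℝ) (β : ℝ),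
        conj (f t) u ≤ (β : EReal) → δ < u x + r * β := by
      intro t u β h
      refine hsep (u, β) ?_
      rw [hHeq]
      apply subset_convexHull
      rw [Set.mem_iUnion]
      exact ⟨t, h⟩
    have hr : 0 ≤ r := by
      by_contra hneg
      push_neg at hneg
      have t0 : T := Classical.arbitrary T
      obtain ⟨v, β, hv⟩ := Scratch.exists_minorant (hproper t0) (hlsc t0) (hconv t0)
      have hvc : conj (f t0) v ≤ (β : EReal) := iSup_le hv
      have hall : ∀ n : ℕ, δ < v x + r * (β + n) := by
        intro n
        apply hepi t0 v (β + n)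
        refine le_trans hvc ?_
        exact_mod_cast (by linarith [Nat.cast_nonneg (α := ℝ) n] : β ≤ β + (n:ℝ))
      obtain ⟨n, hn⟩ := exists_nat_gt ((v x + r * β - δ) / (-r))
      have hall' := hall n
      rw [div_lt_iff₀ (by linarith : (0:ℝ) < -r)] at hn
      nlinarith
    rcases eq_or_lt_of_le hr with hr0 | hrpos
    · -- r = 0
      apply sscIntro (x₀ - x) (-δ) (by linarith)
      intro t
      apply Scratch.fenchel_moreau (hproper t) (hlsc t) (hconv t)
      intro u β hu
      have h1 : δ < u x := by
        have := hepi t u β hu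
        rw [← hr0] at this
        linarith
      have hstep : ((u x₀ : ℝ) : EReal) - 0 ≤ ((u x₀ : ℝ) : EReal) - f t x₀ :=
        EReal.sub_le_sub (le_refl _) (hx₀' t)
      rw [sub_zero] at hstep
      have h2 : ((u x₀ : ℝ) : EReal) ≤ (β : EReal) :=
        le_trans (le_trans hstep (Scratch.conj_lower u x₀)) hu
      have h2' : u x₀ ≤ β := by exact_mod_cast h2
      have h3 : u (x₀ - x) = u x₀ - u x := map_sub u x₀ x
      rw [h3]
      linarith
    · -- r > 0
      have hdr : (0:ℝ) < δ / r := div_pos hδ hrpos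
      apply sscIntro ((-r⁻¹) • x) (-(δ/r)) (by linarith)
      intro t
      apply Scratch.fenchel_moreau (hproper t) (hlsc t) (hconv t)
      intro u β hu
      have h1 := hepi t u β hu
      have h2 : u ((-r⁻¹) • x) = -r⁻¹ * u x := by
        rw [map_smul]; rfl
      rw [h2]
      have hrne : r ≠ 0 := ne_of_gt hrpos
      have h3 : δ * r⁻¹ < (u x + r * β) * r⁻¹ :=
        mul_lt_mul_of_pos_right h1 (inv_pos.mpr hrpos)
      have h4 : (r * β) * r⁻¹ = β := by
        rw [mul_comm r β, mul_assoc, mul_inv_cancel₀ hrne, mul_one]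
      have h5 : (u x + r * β) * r⁻¹ = u x * r⁻¹ + β := by
        rw [add_mul, h4]
      rw [h5] at h3
      rw [div_eq_mul_inv]
      linarith
  tfae_finish
end

section
/- Let X be a reflexive Banach space, let p ∈ l_∞(T), and assume σ(p) satisfies the strong Slater condition, i.e., there is x̂ ∈ X with sup_{t∈T}(f_t(x̂) − p_t) < 0. Then for every x ∈ X: dist(x; F(p)) = sup{ [⟨x*, x⟩ − α]_+ / ‖x*‖ : (x*, α) ∈ C(p) }, under the convention 0/0 := 0 (i.e., no closure of C(p) is needed). -/
open Filter
open scoped ENNReal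

noncomputable section AuxSep
set_option linter.unusedSectionVars false
open Filter

variable {X : Type*} [NormedAddCommGroup X] [NormedSpace ℝ X]

/-- epigraph in `X × ℝ` -/
def Epi (g : X → EReal) : Set (X × ℝ) := {q | g q.1 ≤ (q.2 : EReal)}

lemma conj_ge (g : X → EReal) (u : X →L[ℝ] ℝ) (z : X) :
    (u z : EReal) - g z ≤ conj g u := le_iSup (fun z => (u z : EReal) - g z) z

lemma sub_real_ne_bot {a : EReal} (ha : a ≠ ⊥) (b : ℝ) : a - (b : EReal) ≠ ⊥ := by
  rw [sub_eq_add_neg, ne_eq, EReal.add_eq_bot_iff]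
  push_neg
  exact ⟨ha, by simp⟩

lemma conj_ne_bot {g : X → EReal} (hg : ErealProper g) (u : X →L[ℝ] ℝ) :
    conj g u ≠ ⊥ := by
  obtain ⟨z0, hz0⟩ := hg.2
  intro h
  have h1 : (u z0 : EReal) - g z0 ≤ conj g u := conj_ge g u z0
  rw [h, le_bot_iff, sub_eq_add_neg, EReal.add_eq_bot_iff] at h1
  rcases h1 with h1 | h1
  · exact EReal.coe_ne_bot _ h1
  · rw [EReal.neg_eq_bot_iff] at h1; exact hz0 h1

lemma mem_epi_of_ne {g : X → EReal} (z : X) (hb : g z ≠ ⊥) (ht : g z ≠ ⊤) :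
    (z, (g z).toReal) ∈ Epi g := by
  simp only [Epi, Set.mem_setOf_eq, EReal.coe_toReal ht hb, le_refl]

lemma epi_closed {g : X → EReal} (hlsc : LowerSemicontinuous g) : IsClosed (Epi g) := by
  have h1 : IsClosed {p : X × EReal | g p.1 ≤ p.2} := hlsc.isClosed_epigraph
  have h2 : Continuous (fun q : X × ℝ => (q.1, (q.2 : EReal))) :=
    continuous_fst.prodMk (continuous_coe_real_ereal.comp continuous_snd)
  exact h1.preimage h2

lemma epi_convex {g : X → EReal} (hb : ∀ z, g z ≠ ⊥) (hconv : ErealConvexOn g) :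
    Convex ℝ (Epi g) := by
  rintro ⟨z1, a1⟩ h1 ⟨z2, a2⟩ h2 a b ha hbb hab
  simp only [Epi, Set.mem_setOf_eq] at h1 h2 ⊢
  have ht1 : g z1 ≠ ⊤ := fun h => by simp [h] at h1
  have ht2 : g z2 ≠ ⊤ := fun h => by simp [h] at h2
  have e1 : g z1 = ((g z1).toReal : EReal) := (EReal.coe_toReal ht1 (hb z1)).symm
  have e2 : g z2 = ((g z2).toReal : EReal) := (EReal.coe_toReal ht2 (hb z2)).symm
  have key := hconv z1 z2 a b ha hbb hab
  rw [e1, e2] at key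
  calc g (a • z1 + b • z2) ≤ (a : EReal) * ((g z1).toReal : EReal)
        + (b : EReal) * ((g z2).toReal : EReal) := key
    _ = ((a * (g z1).toReal + b * (g z2).toReal : ℝ) : EReal) := by
        rw [← EReal.coe_mul, ← EReal.coe_mul, ← EReal.coe_add]
    _ ≤ ((a * a1 + b * a2 : ℝ) : EReal) := by
        have i1 : (g z1).toReal ≤ a1 := by
          rw [e1, EReal.coe_le_coe_iff] at h1; exact h1
        have i2 : (g z2).toReal ≤ a2 := by
          rw [e2, EReal.coe_le_coe_iff] at h2; exact h2
        exact_mod_cast add_le_add (mul_le_mul_of_nonneg_left i1 ha)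
          (mul_le_mul_of_nonneg_left i2 hbb)

lemma conj_le_of_sep {g : X → EReal} (hb : ∀ z, g z ≠ ⊥)
    (ψ : X →L[ℝ] ℝ) {r β : ℝ} (hr : r < 0)
    (h : ∀ q ∈ Epi g, ψ q.1 + r * q.2 ≤ β) :
    conj g ((-r)⁻¹ • ψ) ≤ (((-r)⁻¹ * β : ℝ) : EReal) := by
  apply iSup_le
  intro z
  by_cases hz : g z = ⊤
  · rw [hz, EReal.sub_top]; exact bot_le
  · have hzb := hb z
    have e : g z = ((g z).toReal : EReal) := (EReal.coe_toReal hz hzb).symm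
    have hmem := mem_epi_of_ne z hzb hz
    have hq := h _ hmem
    have hrpos : 0 < -r := neg_pos.mpr hr
    have happ : ((-r)⁻¹ • ψ) z = (-r)⁻¹ * ψ z := rfl
    rw [e, happ, ← EReal.coe_sub, EReal.coe_le_coe_iff]
    have := mul_le_mul_of_nonneg_left hq (le_of_lt (inv_pos.mpr hrpos))
    have hrr : (-r)⁻¹ * (r * (g z).toReal) = -(g z).toReal := by
      rw [inv_neg, neg_mul, ← mul_assoc, inv_mul_cancel₀ (ne_of_lt hr), one_mul]
    nlinarith [this]


lemma phi_decomp {E : Type*} [NormedAddCommGroup E] [NormedSpace ℝ E]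
    (φ : (E × ℝ) →L[ℝ] ℝ) (q : E × ℝ) :
    φ q = φ.comp (ContinuousLinearMap.inl ℝ E ℝ) q.1 + q.2 * φ (0, 1) := by
  have hq : q = ((q.1, (0:ℝ)) : E × ℝ) + q.2 • ((0 : E), (1:ℝ)) := by
    ext <;> simp
  conv_lhs => rw [hq]
  rw [map_add, map_smul]
  simp [ContinuousLinearMap.inl_apply, smul_eq_mul]

lemma lemA {g : X → EReal} (hp : ErealProper g) (hlsc : LowerSemicontinuous g)
    (hconv : ErealConvexOn g) : ∃ u0 : X →L[ℝ] ℝ, conj g u0 < ⊤ := by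
  classical
  obtain ⟨z0, hz0⟩ := hp.2
  have hz0b := hp.1 z0
  set m : ℝ := (g z0).toReal with hm
  have he : g z0 = (m : EReal) := (EReal.coe_toReal hz0 hz0b).symm
  have hnot : (z0, m - 1) ∉ Epi g := by
    simp only [Epi, Set.mem_setOf_eq, not_le, he]
    exact_mod_cast sub_one_lt m
  obtain ⟨φ, β, hsep, hβ⟩ :=
    geometric_hahn_banach_closed_point (epi_convex hp.1 hconv) (epi_closed hlsc) hnot
  set ψ := φ.comp (ContinuousLinearMap.inl ℝ X ℝ) with hψ
  set r := φ (0, 1) with hrdef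
  have hφ : ∀ q : X × ℝ, φ q = ψ q.1 + q.2 * r := fun q => phi_decomp φ q
  have hmemt : ∀ t : ℝ, m ≤ t → (z0, t) ∈ Epi g := by
    intro t ht
    simp only [Epi, Set.mem_setOf_eq, he]
    exact_mod_cast ht
  have hrle : r ≤ 0 := by
    by_contra hrpos
    push_neg at hrpos
    set t := max m ((β - ψ z0) / r) with htdef
    have h1 := hsep _ (hmemt t (le_max_left _ _))
    rw [hφ] at h1
    have h2 : (β - ψ z0) / r ≤ t := le_max_right _ _
    rw [div_le_iff₀ hrpos] at h2
    simp only at h1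
    linarith
  have hrne : r ≠ 0 := by
    intro h0
    have h1 := hsep _ (hmemt m le_rfl)
    have h2 := hβ
    rw [hφ] at h1 h2
    rw [h0] at h1 h2
    simp only [mul_zero, add_zero] at h1 h2
    linarith
  have hrneg : r < 0 := lt_of_le_of_ne hrle hrne
  refine ⟨(-r)⁻¹ • ψ, ?_⟩
  have hc := conj_le_of_sep (β := β) hp.1 ψ hrneg (fun q hq => by
    have := hsep q hq; rw [hφ] at this; linarith)
  exact lt_of_le_of_lt hc (EReal.coe_lt_top _)

lemma lemB {g : X → EReal} (hp : ErealProper g) (hlsc : LowerSemicontinuous g)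
    (hconv : ErealConvexOn g) (w : X)
    (H : ∀ u : X →L[ℝ] ℝ, conj g u < ⊤ → ((u w : ℝ) : EReal) ≤ conj g u) :
    g w ≤ 0 := by
  classical
  by_contra hgw
  push_neg at hgw
  have hnot : (w, (0:ℝ)) ∉ Epi g := by
    simp only [Epi, Set.mem_setOf_eq, not_le, EReal.coe_zero]
    exact hgw
  obtain ⟨φ, β, hsep, hβ⟩ :=
    geometric_hahn_banach_closed_point (epi_convex hp.1 hconv) (epi_closed hlsc) hnot
  set ψ := φ.comp (ContinuousLinearMap.inl ℝ X ℝ) with hψ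
  set r := φ (0, 1) with hrdef
  have hφ : ∀ q : X × ℝ, φ q = ψ q.1 + q.2 * r := fun q => phi_decomp φ q
  have hβw : β < ψ w := by
    have := hβ
    rw [hφ] at this
    simpa using this
  obtain ⟨z0, hz0⟩ := hp.2
  have hz0b := hp.1 z0
  set m : ℝ := (g z0).toReal with hm
  have he : g z0 = (m : EReal) := (EReal.coe_toReal hz0 hz0b).symm
  have hmemt : ∀ t : ℝ, m ≤ t → (z0, t) ∈ Epi g := by
    intro t ht
    simp only [Epi, Set.mem_setOf_eq, he]
    exact_mod_cast ht
  have hrle : r ≤ 0 := by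
    by_contra hrpos
    push_neg at hrpos
    set t := max m ((β - ψ z0) / r) with htdef
    have h1 := hsep _ (hmemt t (le_max_left _ _))
    rw [hφ] at h1
    have h2 : (β - ψ z0) / r ≤ t := le_max_right _ _
    rw [div_le_iff₀ hrpos] at h2
    simp only at h1
    linarith
  rcases lt_or_eq_of_le hrle with hrneg | hr0
  · -- r < 0
    set u := (-r)⁻¹ • ψ with hu
    have hc := conj_le_of_sep (β := β) hp.1 ψ hrneg (fun q hq => by
      have := hsep q hq; rw [hφ] at this; linarith)
    have hfin : conj g u < ⊤ := lt_of_le_of_lt hc (EReal.coe_lt_top _)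
    have hH := le_trans (H u hfin) hc
    rw [EReal.coe_le_coe_iff] at hH
    have happ : u w = (-r)⁻¹ * ψ w := rfl
    have hrpos : (0:ℝ) < -r := neg_pos.mpr hrneg
    rw [happ] at hH
    have := mul_lt_mul_of_pos_left hβw (inv_pos.mpr hrpos)
    linarith
  · -- r = 0
    obtain ⟨u0, hu0t⟩ := lemA hp hlsc hconv
    have hu0b : conj g u0 ≠ ⊥ := conj_ne_bot hp u0
    set C0 : ℝ := (conj g u0).toReal with hC0
    have heC0 : conj g u0 = (C0 : EReal) := (EReal.coe_toReal (ne_of_lt hu0t) hu0b).symm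
    have hψβ : ∀ z : X, g z ≠ ⊤ → ψ z ≤ β := by
      intro z hz
      have hmem := mem_epi_of_ne z (hp.1 z) hz
      have := hsep _ hmem
      rw [hφ, hr0] at this
      simp only [mul_zero, add_zero] at this
      linarith
    have hbnd : ∀ σ : ℝ, 0 ≤ σ → conj g (u0 + σ • ψ) ≤ ((C0 + σ * β : ℝ) : EReal) := by
      intro σ hσ
      apply iSup_le
      intro z
      by_cases hz : g z = ⊤
      · rw [hz, EReal.sub_top]; exact bot_le
      · have hzb := hp.1 z
        have e : g z = ((g z).toReal : EReal) := (EReal.coe_toReal hz hzb).symm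
        have h1 : ((u0 z : ℝ) : EReal) - g z ≤ conj g u0 := conj_ge g u0 z
        rw [e, heC0, ← EReal.coe_sub, EReal.coe_le_coe_iff] at h1
        have h2 : ψ z ≤ β := hψβ z hz
        have happ : (u0 + σ • ψ) z = u0 z + σ * ψ z := rfl
        rw [e, happ, ← EReal.coe_sub, EReal.coe_le_coe_iff]
        nlinarith
    have hσw : ∀ σ : ℝ, 0 ≤ σ → u0 w + σ * ψ w ≤ C0 + σ * β := by
      intro σ hσ
      have hfin : conj g (u0 + σ • ψ) < ⊤ :=
        lt_of_le_of_lt (hbnd σ hσ) (EReal.coe_lt_top _)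
      have := le_trans (H _ hfin) (hbnd σ hσ)
      rw [EReal.coe_le_coe_iff] at this
      exact this
    set σ := max 0 ((C0 - u0 w + 1) / (ψ w - β)) with hσdef
    have hσ0 : 0 ≤ σ := le_max_left _ _
    have hq : (C0 - u0 w + 1) / (ψ w - β) ≤ σ := le_max_right _ _
    rw [div_le_iff₀ (by linarith : (0:ℝ) < ψ w - β)] at hq
    have := hσw σ hσ0
    nlinarith

end AuxSep

noncomputable section MainAux
set_option linter.unusedSectionVars false
open Filter

variable {T : Type*} {X : Type*} [NormedAddCommGroup X] [NormedSpace ℝ X]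

/-- The shifted functions `g_t = f_t - p_t`. -/
def gfun (f : T → X → EReal) (p : Linf T) (t : T) : X → EReal :=
  fun z => f t z - ((p t : ℝ) : EReal)

lemma sub_real_ne_top {a : EReal} (ha : a ≠ ⊤) (b : ℝ) : a - (b : EReal) ≠ ⊤ := by
  induction a with
  | bot => simp [EReal.bot_sub]
  | coe a => rw [← EReal.coe_sub]; exact EReal.coe_ne_top _
  | top => exact absurd rfl ha

lemma gfun_proper {f : T → X → EReal} {p : Linf T} (hproper : ∀ t, ErealProper (f t)) (t : T) :
    ErealProper (gfun f p t) := by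
  obtain ⟨hb, z0, hz0⟩ := hproper t
  exact ⟨fun z => sub_real_ne_bot (hb z) _, z0, sub_real_ne_top hz0 _⟩

lemma gfun_lsc {f : T → X → EReal} {p : Linf T} (hlsc : ∀ t, LowerSemicontinuous (f t)) (t : T) :
    LowerSemicontinuous (gfun f p t) := by
  intro z y hy
  simp only [gfun] at hy
  have h1 : y + ((p t : ℝ) : EReal) < f t z := by
    rwa [← EReal.lt_sub_iff_add_lt (Or.inl (EReal.coe_ne_bot _)) (Or.inl (EReal.coe_ne_top _))]
  filter_upwards [hlsc t z _ h1] with z' hz'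
  simp only [gfun]
  exact (EReal.lt_sub_iff_add_lt (Or.inl (EReal.coe_ne_bot _)) (Or.inl (EReal.coe_ne_top _))).mpr hz'

lemma gfun_convex {f : T → X → EReal} {p : Linf T} (hproper : ∀ t, ErealProper (f t))
    (hconv : ∀ t, ErealConvexOn (f t)) (t : T) :
    ErealConvexOn (gfun f p t) := by
  set c : ℝ := (p t : ℝ) with hc
  intro x y a b ha hb hab
  rcases eq_or_lt_of_le ha with ha0 | hapos
  · have hb1 : b = 1 := by linarith
    subst hb1
    rw [← ha0]
    simp only [gfun, zero_smul, one_smul, zero_add, EReal.coe_zero, EReal.coe_one,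
      EReal.zero_mul, one_mul]
    exact le_rfl
  rcases eq_or_lt_of_le hb with hb0 | hbpos
  · have ha1 : a = 1 := by linarith
    subst ha1
    rw [← hb0]
    simp only [gfun, one_smul, zero_smul, add_zero, EReal.coe_zero, EReal.coe_one,
      EReal.zero_mul, one_mul]
    exact le_rfl
  have hbne : ∀ z, f t z ≠ ⊥ := (hproper t).1
  by_cases hx : f t x = ⊤
  · have h1 : gfun f p t x = ⊤ := by rw [gfun, hx]; exact EReal.top_sub_coe c
    have h2 : (a : EReal) * gfun f p t x = ⊤ := by rw [h1]; exact EReal.coe_mul_top_of_pos hapos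
    have h3 : (b : EReal) * gfun f p t y ≠ ⊥ := by
      have hy' : gfun f p t y ≠ ⊥ := sub_real_ne_bot (hbne y) c
      by_cases hyt : gfun f p t y = ⊤
      · rw [hyt, EReal.coe_mul_top_of_pos hbpos]; exact top_ne_bot
      · rw [← EReal.coe_toReal hyt hy', ← EReal.coe_mul]; exact EReal.coe_ne_bot _
    rw [h2, EReal.top_add_of_ne_bot h3]
    exact le_top
  by_cases hy : f t y = ⊤
  · have h1 : gfun f p t y = ⊤ := by rw [gfun, hy]; exact EReal.top_sub_coe c
    have h2 : (b : EReal) * gfun f p t y = ⊤ := by rw [h1]; exact EReal.coe_mul_top_of_pos hbpos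
    have h3 : (a : EReal) * gfun f p t x ≠ ⊥ := by
      have hx' : gfun f p t x ≠ ⊥ := sub_real_ne_bot (hbne x) c
      by_cases hxt : gfun f p t x = ⊤
      · rw [hxt, EReal.coe_mul_top_of_pos hapos]; exact top_ne_bot
      · rw [← EReal.coe_toReal hxt hx', ← EReal.coe_mul]; exact EReal.coe_ne_bot _
    rw [h2, EReal.add_top_of_ne_bot h3]
    exact le_top
  · -- both finite
    set rx : ℝ := (f t x).toReal with hrx
    set ry : ℝ := (f t y).toReal with hry
    have ex : f t x = (rx : EReal) := (EReal.coe_toReal hx (hbne x)).symm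
    have ey : f t y = (ry : EReal) := (EReal.coe_toReal hy (hbne y)).symm
    have key := hconv t x y a b ha hb hab
    rw [ex, ey, ← EReal.coe_mul, ← EReal.coe_mul, ← EReal.coe_add] at key
    have h1 : gfun f p t (a • x + b • y) ≤ ((a * rx + b * ry - c : ℝ) : EReal) := by
      rw [gfun, EReal.coe_sub]
      exact EReal.sub_le_sub key le_rfl
    refine le_trans h1 ?_
    rw [gfun, gfun, ex, ey, ← EReal.coe_sub, ← EReal.coe_sub, ← EReal.coe_mul, ← EReal.coe_mul,
      ← EReal.coe_add, EReal.coe_le_coe_iff]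
    have h2 : a * (rx - (p t : ℝ)) + b * (ry - (p t : ℝ)) = a * rx + b * ry - (a + b) * (p t : ℝ) := by
      ring
    rw [← hc] at h2
    rw [h2, hab, one_mul]

lemma feas_closed {f : T → X → EReal} {p : Linf T} (hlsc : ∀ t, LowerSemicontinuous (f t)) :
    IsClosed (feas f p) := by
  have : feas f p = ⋂ t : T, (f t) ⁻¹' (Set.Iic ((p t : ℝ) : EReal)) := by
    ext z; simp [feas, Set.mem_iInter, Set.mem_preimage, Set.mem_Iic]
  rw [this]
  exact isClosed_iInter fun t => (hlsc t).isClosed_preimage _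

lemma feas_convex {f : T → X → EReal} {p : Linf T} (hproper : ∀ t, ErealProper (f t))
    (hconv : ∀ t, ErealConvexOn (f t)) :
    Convex ℝ (feas f p) := by
  intro y1 h1 y2 h2 a b ha hb hab
  intro t
  have hbne := (hproper t).1
  have h1t := h1 t
  have h2t := h2 t
  have ht1 : f t y1 ≠ ⊤ := ne_top_of_le_ne_top (EReal.coe_ne_top _) h1t
  have ht2 : f t y2 ≠ ⊤ := ne_top_of_le_ne_top (EReal.coe_ne_top _) h2t
  have e1 : f t y1 = ((f t y1).toReal : EReal) := (EReal.coe_toReal ht1 (hbne y1)).symm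
  have e2 : f t y2 = ((f t y2).toReal : EReal) := (EReal.coe_toReal ht2 (hbne y2)).symm
  have key := hconv t y1 y2 a b ha hb hab
  rw [e1, e2, ← EReal.coe_mul, ← EReal.coe_mul, ← EReal.coe_add] at key
  refine le_trans key ?_
  rw [e1] at h1t
  rw [e2] at h2t
  rw [EReal.coe_le_coe_iff] at h1t h2t ⊢
  calc a * (f t y1).toReal + b * (f t y2).toReal
      ≤ a * (p t : ℝ) + b * (p t : ℝ) :=
        add_le_add (mul_le_mul_of_nonneg_left h1t ha) (mul_le_mul_of_nonneg_left h2t hb)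
    _ = (a + b) * (p t : ℝ) := by ring
    _ = (p t : ℝ) := by rw [hab, one_mul]

end MainAux

noncomputable section ConeAux
set_option linter.unusedSectionVars false
open Filter

variable {T : Type*} {X : Type*} [NormedAddCommGroup X] [NormedSpace ℝ X]

/-- generators: epigraphs of the conjugates plus the extra point `(0,1)`. -/
def Aset (f : T → X → EReal) (p : Linf T) : Set ((X →L[ℝ] ℝ) × ℝ) :=
  (⋃ t : T, epiConj (gfun f p t)) ∪ {((0 : X →L[ℝ] ℝ), (1 : ℝ))}

/-- the convex cone generated by `Aset`. -/
def Sset (f : T → X → EReal) (p : Linf T) : Set ((X →L[ℝ] ℝ) × ℝ) :=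
  {q | ∃ r : ℝ, 0 ≤ r ∧ ∃ w ∈ convexHull ℝ (Aset f p), q = r • w}

lemma Aset_subset_Sset {f : T → X → EReal} {p : Linf T} : Aset f p ⊆ Sset f p :=
  fun q hq => ⟨1, zero_le_one, q, subset_convexHull ℝ _ hq, (one_smul ℝ q).symm⟩

lemma zero_mem_Sset {f : T → X → EReal} {p : Linf T} : (0 : (X →L[ℝ] ℝ) × ℝ) ∈ Sset f p :=
  ⟨0, le_rfl, ((0 : X →L[ℝ] ℝ), (1 : ℝ)),
    subset_convexHull ℝ _ (Set.mem_union_right _ rfl), (zero_smul ℝ _).symm⟩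

lemma Sset_smul {f : T → X → EReal} {p : Linf T} {c : ℝ} (hc : 0 ≤ c)
    {q : (X →L[ℝ] ℝ) × ℝ} (hq : q ∈ Sset f p) : c • q ∈ Sset f p := by
  obtain ⟨r, hr, w, hw, rfl⟩ := hq
  exact ⟨c * r, mul_nonneg hc hr, w, hw, (smul_smul c r w)⟩

lemma Sset_convex {f : T → X → EReal} {p : Linf T} : Convex ℝ (Sset f p) := by
  rintro q1 ⟨r1, hr1, w1, hw1, rfl⟩ q2 ⟨r2, hr2, w2, hw2, rfl⟩ a b ha hb hab
  rcases eq_or_lt_of_le (by positivity : (0:ℝ) ≤ a * r1 + b * r2) with h0 | hpos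
  · have h1 : a * r1 = 0 := by nlinarith [mul_nonneg ha hr1, mul_nonneg hb hr2]
    have h2 : b * r2 = 0 := by nlinarith [mul_nonneg ha hr1, mul_nonneg hb hr2]
    rw [smul_smul, smul_smul, h1, h2, zero_smul, zero_smul, add_zero]
    exact zero_mem_Sset
  · refine ⟨a * r1 + b * r2, le_of_lt hpos,
      (a * r1 / (a * r1 + b * r2)) • w1 + (b * r2 / (a * r1 + b * r2)) • w2, ?_, ?_⟩
    · exact (convex_convexHull ℝ _) hw1 hw2
        (div_nonneg (mul_nonneg ha hr1) (le_of_lt hpos))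
        (div_nonneg (mul_nonneg hb hr2) (le_of_lt hpos))
        (by field_simp)
    · rw [smul_add, smul_smul, smul_smul, smul_smul, smul_smul]
      have e1 : (a * r1 + b * r2) * (a * r1 / (a * r1 + b * r2)) = a * r1 := by
        field_simp
      have e2 : (a * r1 + b * r2) * (b * r2 / (a * r1 + b * r2)) = b * r2 := by
        field_simp
      rw [e1, e2]

lemma feas_mem_of_gfun {f : T → X → EReal} {p : Linf T} {z : X}
    (h : ∀ t, gfun f p t z ≤ 0) : z ∈ feas f p := by
  intro t
  have := h t
  rw [gfun] at this
  have h2 := (EReal.sub_le_iff_le_add (Or.inl (EReal.coe_ne_bot _))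
    (Or.inl (EReal.coe_ne_top _))).mp this
  rwa [zero_add] at h2

end ConeAux

noncomputable section Transfer
set_option linter.unusedSectionVars false
open Filter

variable {T : Type*} {X : Type*} [NormedAddCommGroup X] [NormedSpace ℝ X]

lemma div_le_div_of_nonneg_right' {a b c : ℝ} (hab : a ≤ b) (hc : 0 < c) :
    a / c ≤ b / c := by
  apply div_le_div_of_nonneg_right hab hc.le

lemma transfer [Nonempty T] (f : T → X → EReal) (p : Linf T)
    (hproper : ∀ t, ErealProper (f t)) (x : X)
    {q' : (X →L[ℝ] ℝ) × ℝ} (hq' : q' ∈ Sset f p) (hne : q'.1 ≠ 0) :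
    ENNReal.ofReal ((q'.1 x - q'.2) / ‖q'.1‖) ≤
      ⨆ q ∈ Cset f p, ENNReal.ofReal (max (q.1 x - q.2) 0 / ‖q.1‖) := by
  classical
  obtain ⟨r, hr0, w, hw, rfl⟩ := hq'
  have hwne : w.1 ≠ 0 := by
    intro h
    apply hne
    show (r • w).1 = 0
    rw [Prod.smul_fst, h, smul_zero]
  have hrne : r ≠ 0 := by
    intro h
    apply hne
    show (r • w).1 = 0
    rw [h, Prod.smul_fst, zero_smul]
  have hrpos : 0 < r := lt_of_le_of_ne hr0 (Ne.symm hrne)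
  have e1 : (r • w).1 x = r * (w.1 x) := by
    rw [Prod.smul_fst, ContinuousLinearMap.smul_apply, smul_eq_mul]
  have e2 : (r • w).2 = r * w.2 := by
    rw [Prod.smul_snd, smul_eq_mul]
  have e3 : ‖(r • w).1‖ = r * ‖w.1‖ := by
    rw [Prod.smul_fst]
    rw [show ‖r • w.1‖ = ‖r‖ * ‖w.1‖ from norm_smul r w.1, Real.norm_eq_abs, abs_of_pos hrpos]
  have elhs : ((r • w).1 x - (r • w).2) / ‖(r • w).1‖ = (w.1 x - w.2) / ‖w.1‖ := by
    rw [e1, e2, e3, ← mul_sub, mul_div_mul_left _ _ hrne]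
  rw [elhs]
  by_cases hposn : 0 < w.1 x - w.2
  swap
  · have hn : (w.1 x - w.2) / ‖w.1‖ ≤ 0 :=
      div_nonpos_iff.mpr (Or.inr ⟨by linarith, norm_nonneg _⟩)
    rw [ENNReal.ofReal_eq_zero.mpr hn]
    exact zero_le
  -- main case
  rw [convexHull_eq] at hw
  obtain ⟨ι, tt, wt, zf, hw0, hw1, hz, hcm⟩ := hw
  have hcm' : ∑ i ∈ tt, wt i • zf i = w := by
    exact (Finset.centerMass_eq_of_sum_1 _ _ hw1).symm.trans hcm
  set t1 := tt.filter (fun i => zf i ∈ ⋃ t : T, epiConj (gfun f p t)) with ht1def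
  have ht1sub : t1 ⊆ tt := Finset.filter_subset _ _
  have hz01 : ∀ i ∈ tt, i ∉ t1 → zf i = ((0 : X →L[ℝ] ℝ), (1 : ℝ)) := by
    intro i hi hni
    rcases hz i hi with h | h
    · exact absurd (Finset.mem_filter.mpr ⟨hi, h⟩) hni
    · exact h
  have hsum1 : w.1 = ∑ i ∈ tt, wt i • (zf i).1 := by
    rw [← hcm', Prod.fst_sum]
    rfl
  have hsum2 : w.2 = ∑ i ∈ tt, wt i * (zf i).2 := by
    rw [← hcm', Prod.snd_sum]
    rfl
  have hw1' : w.1 = ∑ i ∈ t1, wt i • (zf i).1 := by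
    rw [hsum1]
    refine (Finset.sum_subset ht1sub ?_).symm
    intro i hi hni
    rw [hz01 i hi hni, smul_zero]
  set Λ : ℝ := ∑ i ∈ t1, wt i with hΛdef
  have hΛ0 : 0 ≤ Λ := Finset.sum_nonneg fun i hi => hw0 i (ht1sub hi)
  have hΛ : 0 < Λ := by
    rcases eq_or_lt_of_le hΛ0 with h0 | h; swap
    · exact h
    exfalso
    apply hwne
    rw [hw1']
    apply Finset.sum_eq_zero
    intro i hi
    have := (Finset.sum_eq_zero_iff_of_nonneg (fun i hi => hw0 i (ht1sub hi))).mp h0.symm i hi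
    rw [this, zero_smul]
  have hinv : 0 < Λ⁻¹ := inv_pos.mpr hΛ
  have hex : ∀ i ∈ t1, ∃ t : T, zf i ∈ epiConj (gfun f p t) := fun i hi =>
    Set.mem_iUnion.mp (Finset.mem_filter.mp hi).2
  set ti : ι → T := fun i =>
    if h : ∃ t : T, zf i ∈ epiConj (gfun f p t) then h.choose else Classical.arbitrary T
    with htidef
  have hti : ∀ i ∈ t1, zf i ∈ epiConj (gfun f p (ti i)) := by
    intro i hi
    simp only [htidef, dif_pos (hex i hi)]
    exact (hex i hi).choose_spec
  set τ : ι → ℝ := fun i => (conj (gfun f p (ti i)) (zf i).1).toReal with hτdef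
  have hconjfin : ∀ i ∈ t1, conj (gfun f p (ti i)) (zf i).1 = ((τ i : ℝ) : EReal) := by
    intro i hi
    have hub : conj (gfun f p (ti i)) (zf i).1 ≤ (((zf i).2 : ℝ) : EReal) := hti i hi
    exact (EReal.coe_toReal (ne_top_of_le_ne_top (EReal.coe_ne_top _) hub)
      (conj_ne_bot (gfun_proper hproper _) _)).symm
  have hτle : ∀ i ∈ t1, τ i ≤ (zf i).2 := by
    intro i hi
    have hub : conj (gfun f p (ti i)) (zf i).1 ≤ (((zf i).2 : ℝ) : EReal) := hti i hi
    rw [hconjfin i hi, EReal.coe_le_coe_iff] at hub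
    exact hub
  set pts : ι → (X →L[ℝ] ℝ) × ℝ := fun i => ((zf i).1, τ i) with hptsdef
  have hptsmem : ∀ i ∈ t1, pts i ∈ ⋃ t : T, gphConj (gfun f p t) := fun i hi =>
    Set.mem_iUnion.mpr ⟨ti i, hconjfin i hi⟩
  set q : (X →L[ℝ] ℝ) × ℝ := t1.centerMass wt pts with hqdef
  have hqC : q ∈ Cset f p :=
    Finset.centerMass_mem_convexHull t1 (fun i hi => hw0 i (ht1sub hi)) hΛ hptsmem
  have hq1 : q.1 = Λ⁻¹ • w.1 := by
    rw [hqdef, Finset.centerMass, Prod.smul_fst, Prod.fst_sum, hw1']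
    rfl
  have hq2 : q.2 = Λ⁻¹ * ∑ i ∈ t1, wt i * τ i := by
    rw [hqdef, Finset.centerMass, Prod.smul_snd, Prod.snd_sum, smul_eq_mul]
    rfl
  have hq2le : q.2 ≤ Λ⁻¹ * w.2 := by
    rw [hq2, hsum2]
    apply mul_le_mul_of_nonneg_left _ (le_of_lt hinv)
    calc ∑ i ∈ t1, wt i * τ i ≤ ∑ i ∈ t1, wt i * (zf i).2 :=
          Finset.sum_le_sum fun i hi =>
            mul_le_mul_of_nonneg_left (hτle i hi) (hw0 i (ht1sub hi))
      _ ≤ ∑ i ∈ tt, wt i * (zf i).2 := by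
          apply Finset.sum_le_sum_of_subset_of_nonneg ht1sub
          intro i hi hni
          rw [hz01 i hi hni]
          simp only [mul_one]
          exact hw0 i hi
  have hq1x : q.1 x = Λ⁻¹ * (w.1 x) := by
    rw [hq1, ContinuousLinearMap.smul_apply, smul_eq_mul]
  have hq1n : ‖q.1‖ = Λ⁻¹ * ‖w.1‖ := by
    rw [hq1]
    rw [show ‖Λ⁻¹ • w.1‖ = ‖Λ⁻¹‖ * ‖w.1‖ from norm_smul _ w.1, Real.norm_eq_abs, abs_of_pos hinv]
  have hB : 0 < ‖w.1‖ := norm_pos_iff.mpr hwne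
  have hnum : Λ⁻¹ * (w.1 x - w.2) ≤ q.1 x - q.2 := by
    rw [hq1x, mul_sub]
    linarith [hq2le]
  have hratio : (w.1 x - w.2) / ‖w.1‖ ≤ max (q.1 x - q.2) 0 / ‖q.1‖ := by
    have hden : 0 < Λ⁻¹ * ‖w.1‖ := mul_pos hinv hB
    rw [hq1n]
    calc (w.1 x - w.2) / ‖w.1‖ = (Λ⁻¹ * (w.1 x - w.2)) / (Λ⁻¹ * ‖w.1‖) :=
          (mul_div_mul_left _ _ (ne_of_gt hinv)).symm
      _ ≤ max (q.1 x - q.2) 0 / (Λ⁻¹ * ‖w.1‖) :=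
          div_le_div_of_nonneg_right' (le_trans hnum (le_max_left _ _)) hden
  calc ENNReal.ofReal ((w.1 x - w.2) / ‖w.1‖)
      ≤ ENNReal.ofReal (max (q.1 x - q.2) 0 / ‖q.1‖) := ENNReal.ofReal_le_ofReal hratio
    _ ≤ ⨆ q ∈ Cset f p, ENNReal.ofReal (max (q.1 x - q.2) 0 / ‖q.1‖) :=
          le_iSup₂ (f := fun (q : (X →L[ℝ] ℝ) × ℝ) (_ : q ∈ Cset f p) =>
            ENNReal.ofReal (max (q.1 x - q.2) 0 / ‖q.1‖)) q hqC

end Transfer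

noncomputable section Farkas
set_option linter.unusedSectionVars false
open Filter

variable {T : Type*} {X : Type*} [NormedAddCommGroup X] [NormedSpace ℝ X]

lemma ereal_le_sub_of_nonpos {a : ℝ} {b : EReal} (hb : b ≤ 0) :
    ((a : ℝ) : EReal) ≤ ((a : ℝ) : EReal) - b := by
  rw [sub_eq_add_neg]
  calc ((a : ℝ) : EReal) = ((a : ℝ) : EReal) + 0 := (add_zero _).symm
    _ ≤ ((a : ℝ) : EReal) + (-b) := add_le_add le_rfl (by rw [show (0:EReal) = -0 from neg_zero.symm, EReal.neg_le_neg_iff]; exact hb)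

lemma farkas [Nonempty T] (f : T → X → EReal) (p : Linf T)
    (hproper : ∀ t, ErealProper (f t)) (hlsc : ∀ t, LowerSemicontinuous (f t))
    (hconv : ∀ t, ErealConvexOn (f t))
    (hrefl : Function.Surjective (NormedSpace.inclusionInDoubleDual ℝ X))
    (xh : X) (hxh : ∀ t : T, gfun f p t xh ≤ 0)
    (xs : X →L[ℝ] ℝ) (c : ℝ) (hsep : ∀ y ∈ feas f p, xs y ≤ c) :
    (xs, c) ∈ closure (Sset f p) := by
  by_contra hnot
  obtain ⟨φ, s, hφsep, hφx⟩ := geometric_hahn_banach_closed_point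
    (Sset_convex.closure) isClosed_closure hnot
  set ψ := φ.comp (ContinuousLinearMap.inl ℝ (X →L[ℝ] ℝ) ℝ) with hψdef
  set r := φ (0, 1) with hrdef
  have hφ : ∀ q : (X →L[ℝ] ℝ) × ℝ, φ q = ψ q.1 + q.2 * r := fun q => phi_decomp φ q
  obtain ⟨y, hy⟩ := hrefl ψ
  have hyψ : ∀ u : X →L[ℝ] ℝ, ψ u = u y := fun u => by rw [← hy]; rfl
  have hS : ∀ q ∈ Sset f p, φ q < s := fun q hq => hφsep q (subset_closure hq)
  have hs0 : 0 < s := by have := hS 0 zero_mem_Sset; rwa [map_zero] at this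
  have hSle : ∀ q ∈ Sset f p, φ q ≤ 0 := by
    intro q hq
    by_contra hpos
    push_neg at hpos
    obtain ⟨n, hn⟩ := Archimedean.arch s hpos
    have hmem : ((n : ℝ)) • q ∈ Sset f p := Sset_smul (by positivity) hq
    have h2 := hS _ hmem
    rw [map_smul, smul_eq_mul] at h2
    rw [nsmul_eq_mul] at hn
    linarith
  have hrle : r ≤ 0 := by
    have h1 := hSle _ (Aset_subset_Sset (Set.mem_union_right _ rfl))
    rw [hφ] at h1
    simpa using h1
  have hepi : ∀ (t : T) (u : X →L[ℝ] ℝ) (γ : ℝ), conj (gfun f p t) u ≤ ((γ : ℝ) : EReal) →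
      u y + γ * r ≤ 0 := by
    intro t u γ hγ
    have hmem : ((u, γ) : (X →L[ℝ] ℝ) × ℝ) ∈ Sset f p :=
      Aset_subset_Sset (Set.mem_union_left _ (Set.mem_iUnion.mpr ⟨t, hγ⟩))
    have h1 := hSle _ hmem
    rw [hφ] at h1
    rw [hyψ u] at h1
    exact h1
  have hφxs : 0 < ψ xs + c * r := by
    have := lt_trans hs0 hφx
    rwa [hφ (xs, c)] at this
  rcases lt_or_eq_of_le hrle with hrneg | hr0
  · -- case r < 0
    set y' := (-r)⁻¹ • y with hy'def
    have hrpos : 0 < -r := neg_pos.mpr hrneg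
    have hkey : ∀ t : T, gfun f p t y' ≤ 0 := by
      intro t
      apply lemB (gfun_proper hproper t) (gfun_lsc hlsc t) (gfun_convex hproper hconv t)
      intro u hu
      have hub : conj (gfun f p t) u = (((conj (gfun f p t) u).toReal : ℝ) : EReal) :=
        (EReal.coe_toReal (ne_of_lt hu) (conj_ne_bot (gfun_proper hproper t) u)).symm
      set γ : ℝ := (conj (gfun f p t) u).toReal with hγdef
      have h1 := hepi t u γ (le_of_eq hub)
      have h2 : u y' = (-r)⁻¹ * u y := by rw [hy'def, map_smul, smul_eq_mul]
      have h3 : u y ≤ (-r) * γ := by linarith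
      have h4 := mul_le_mul_of_nonneg_left h3 (le_of_lt (inv_pos.mpr hrpos))
      have h5 : (-r)⁻¹ * ((-r) * γ) = γ := by
        rw [← mul_assoc, inv_mul_cancel₀ (ne_of_gt hrpos), one_mul]
      rw [hub, EReal.coe_le_coe_iff, h2]
      linarith
    have hyF := feas_mem_of_gfun hkey
    have h6 : xs y' ≤ c := hsep y' hyF
    have h7 : xs y' = (-r)⁻¹ * xs y := by rw [hy'def, map_smul, smul_eq_mul]
    have h8 : (-r) * c < xs y := by rw [hyψ xs] at hφxs; linarith
    have h9 := mul_lt_mul_of_pos_left h8 (inv_pos.mpr hrpos)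
    have h10 : (-r)⁻¹ * ((-r) * c) = c := by
      rw [← mul_assoc, inv_mul_cancel₀ (ne_of_gt hrpos), one_mul]
    rw [h10] at h9
    rw [h7] at h6
    linarith
  · -- case r = 0
    have hdom : ∀ (t : T) (u : X →L[ℝ] ℝ), conj (gfun f p t) u < ⊤ → u y ≤ 0 := by
      intro t u hu
      have hub : conj (gfun f p t) u = (((conj (gfun f p t) u).toReal : ℝ) : EReal) :=
        (EReal.coe_toReal (ne_of_lt hu) (conj_ne_bot (gfun_proper hproper t) u)).symm
      have h1 := hepi t u _ (le_of_eq hub)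
      rw [hr0] at h1
      simpa using h1
    have hxsy : 0 < xs y := by
      have h1 := hφxs
      rw [hyψ xs, hr0] at h1
      simpa using h1
    obtain ⟨μ, hμpos, hq⟩ : ∃ μ : ℝ, 0 < μ ∧ c - xs xh + 1 ≤ μ * xs y := by
      refine ⟨max 1 ((c - xs xh + 1) / (xs y)), lt_of_lt_of_le one_pos (le_max_left _ _), ?_⟩
      have hq' : (c - xs xh + 1) / (xs y) ≤ max 1 ((c - xs xh + 1) / (xs y)) := le_max_right _ _
      rw [div_le_iff₀ hxsy] at hq'
      linarith
    have hkey : ∀ t : T, gfun f p t (xh + μ • y) ≤ 0 := by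
      intro t
      apply lemB (gfun_proper hproper t) (gfun_lsc hlsc t) (gfun_convex hproper hconv t)
      intro u hu
      have huy := hdom t u hu
      have h1 : ((u xh : ℝ) : EReal) ≤ conj (gfun f p t) u :=
        le_trans (ereal_le_sub_of_nonpos (hxh t)) (conj_ge _ u xh)
      have h3 : u (xh + μ • y) ≤ u xh := by
        have he : u (xh + μ • y) = u xh + μ * u y := by
          rw [map_add, map_smul, smul_eq_mul]
        rw [he]
        have h4 : μ * u y ≤ 0 := mul_nonpos_iff.mpr (Or.inl ⟨hμpos.le, huy⟩)
        linarith
      exact le_trans (by exact_mod_cast h3) h1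
    have h2 : xs (xh + μ • y) ≤ c := hsep _ (feas_mem_of_gfun hkey)
    rw [map_add, map_smul, smul_eq_mul] at h2
    linarith

end Farkas
set_option maxHeartbeats 1000000

theorem stmt_14 {T : Type*} [Nonempty T]
    {X : Type*} [NormedAddCommGroup X] [NormedSpace ℝ X] [CompleteSpace X]
    (f : T → X → EReal)
    (hproper : ∀ t, ErealProper (f t))
    (hlsc : ∀ t, LowerSemicontinuous (f t))
    (hconv : ∀ t, ErealConvexOn (f t))
    (hrefl : Function.Surjective (NormedSpace.inclusionInDoubleDual ℝ X))
    (p : Linf T) (hssc : SSC f p) (x : X) :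
    EMetric.infEdist x (feas f p) =
      ⨆ q ∈ Cset f p, ENNReal.ofReal (max (q.1 x - q.2) 0 / ‖q.1‖) := by
  classical
  obtain ⟨xh, hxh⟩ := hssc
  have hxh' : ∀ t : T, gfun f p t xh ≤ 0 := by
    intro t
    have h1 : f t xh - ((p t : ℝ) : EReal) ≤ ⨆ t : T, (f t xh - ((p t : ℝ) : EReal)) :=
      le_iSup (fun t : T => f t xh - ((p t : ℝ) : EReal)) t
    exact le_of_lt (lt_of_le_of_lt h1 hxh)
  have hxhF : xh ∈ feas f p := feas_mem_of_gfun hxh'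
  -- === Easy direction : RHS ≤ infEdist ===
  have easy : (⨆ q ∈ Cset f p, ENNReal.ofReal (max (q.1 x - q.2) 0 / ‖q.1‖)) ≤
      EMetric.infEdist x (feas f p) := by
    apply iSup₂_le
    intro q hq
    have hqF : ∀ y ∈ feas f p, q.1 y ≤ q.2 := by
      have hsubset : Cset f p ⊆ {q : (X →L[ℝ] ℝ) × ℝ | ∀ y ∈ feas f p, q.1 y ≤ q.2} := by
        apply convexHull_min
        · rintro q' hq' y hy
          obtain ⟨t, ht⟩ := Set.mem_iUnion.mp hq'
          have hconj : conj (gfun f p t) q'.1 = ((q'.2 : ℝ) : EReal) := ht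
          have hgy : gfun f p t y ≤ 0 := by
            have h := hy t
            exact EReal.sub_le_of_le_add (by rwa [zero_add])
          have h1 : ((q'.1 y : ℝ) : EReal) ≤ conj (gfun f p t) q'.1 :=
            le_trans (ereal_le_sub_of_nonpos hgy) (conj_ge _ _ y)
          rw [hconj, EReal.coe_le_coe_iff] at h1
          exact h1
        · intro q1 hq1 q2 hq2 a b ha hb hab
          intro y hy
          have e : (a • q1 + b • q2).1 y = a * q1.1 y + b * q2.1 y := by
            simp [Prod.smul_fst, ContinuousLinearMap.add_apply,
              ContinuousLinearMap.smul_apply, smul_eq_mul]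
          have e2 : (a • q1 + b • q2).2 = a * q1.2 + b * q2.2 := by
            simp [Prod.smul_snd, smul_eq_mul]
          rw [e, e2]
          exact add_le_add (mul_le_mul_of_nonneg_left (hq1 y hy) ha)
            (mul_le_mul_of_nonneg_left (hq2 y hy) hb)
      exact hsubset hq
    refine (EMetric.le_infEdist).2 ?_
    intro y hy
    have hratio : max (q.1 x - q.2) 0 / ‖q.1‖ ≤ dist x y := by
      by_cases hq1 : q.1 = 0
      · rw [hq1]
        simp only [norm_zero, div_zero]
        exact dist_nonneg
      · have hn : 0 < ‖q.1‖ := norm_pos_iff.mpr hq1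
        rw [div_le_iff₀ hn]
        have h2 : q.1 x - q.2 ≤ q.1 x - q.1 y := by linarith [hqF y hy]
        have h3 : q.1 x - q.1 y ≤ ‖q.1‖ * dist x y := by
          have h5 := (q.1).le_opNorm (x - y)
          have h4 : q.1 x - q.1 y = q.1 (x - y) := (map_sub _ _ _).symm
          rw [h4, dist_eq_norm]
          calc q.1 (x - y) ≤ |q.1 (x - y)| := le_abs_self _
            _ ≤ ‖q.1‖ * ‖x - y‖ := by rwa [← Real.norm_eq_abs]
        have h3' : q.1 x - q.1 y ≤ dist x y * ‖q.1‖ := by rw [mul_comm] at h3; exact h3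
        rw [max_le_iff]
        constructor
        · linarith
        · positivity
    calc ENNReal.ofReal (max (q.1 x - q.2) 0 / ‖q.1‖)
        ≤ ENNReal.ofReal (dist x y) := ENNReal.ofReal_le_ofReal hratio
      _ = edist x y := (edist_dist x y).symm
  -- === Hard direction ===
  refine le_antisymm ?_ easy
  by_contra hlt
  push_neg at hlt
  set RHS := ⨆ q ∈ Cset f p, ENNReal.ofReal (max (q.1 x - q.2) 0 / ‖q.1‖) with hRHSdef
  have hDlt : EMetric.infEdist x (feas f p) ≠ ⊤ :=
    ne_top_of_le_ne_top (edist_ne_top x xh) (EMetric.infEdist_le_edist_of_mem hxhF)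
  obtain ⟨d', hd'0, h1, h2⟩ := ENNReal.lt_iff_exists_real_btwn.mp hlt
  have hd'pos : 0 < d' := by
    have h3 : (0:ℝ≥0∞) < ENNReal.ofReal d' := lt_of_le_of_lt zero_le h1
    rwa [ENNReal.ofReal_pos] at h3
  have hRfin : RHS ≠ ⊤ := ne_top_of_lt h1
  have htR : RHS.toReal < d' := (ENNReal.lt_ofReal_iff_toReal_lt hRfin).mp h1
  have htR0 : 0 ≤ RHS.toReal := ENNReal.toReal_nonneg
  set ρ : ℝ := (RHS.toReal + d') / 2 with hρdef
  have hρpos : 0 < ρ := by rw [hρdef]; linarith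
  have hρlt : ρ < d' := by rw [hρdef]; linarith
  have hRltρ : RHS < ENNReal.ofReal ρ := by
    rw [← ENNReal.ofReal_toReal hRfin]
    exact (ENNReal.ofReal_lt_ofReal_iff hρpos).mpr (by rw [hρdef]; linarith)
  set d'' : ℝ := (ρ + d') / 2 with hd''def
  have hρd'' : ρ < d'' := by rw [hd''def]; linarith
  have hd''lt : d'' < d' := by rw [hd''def]; linarith
  have hd''pos : 0 < d'' := lt_trans hρpos hρd''
  -- ball disjoint from feasible set
  have hdisj : Disjoint (Metric.ball x d') (feas f p) := by
    rw [Set.disjoint_left]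
    intro y hyb hyF
    have h3 : EMetric.infEdist x (feas f p) ≤ edist x y :=
      EMetric.infEdist_le_edist_of_mem hyF
    have h4 : edist x y < ENNReal.ofReal d' := by
      rw [edist_dist]
      exact (ENNReal.ofReal_lt_ofReal_iff hd'pos).mpr (by
        rw [Metric.mem_ball] at hyb; rw [dist_comm]; exact hyb)
    exact absurd (lt_of_le_of_lt h3 h4) (not_lt_of_ge (le_of_lt h2))
  obtain ⟨f0, u0, hball, hFge⟩ := geometric_hahn_banach_open (convex_ball x d')
    Metric.isOpen_ball (feas_convex hproper hconv) hdisj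
  have hf0ne : f0 ≠ 0 := by
    intro h0
    have h1' := hball x (Metric.mem_ball_self hd'pos)
    have h2' := hFge xh hxhF
    rw [h0] at h1' h2'
    simp only [ContinuousLinearMap.zero_apply] at h1' h2'
    linarith
  have hf0pos : 0 < ‖f0‖ := norm_pos_iff.mpr hf0ne
  -- quantitative separation
  have hquant : f0 x + d'' * ‖f0‖ < u0 := by
    have hrlt : (d''/d') * ‖f0‖ < ‖f0‖ := by
      have hlt1 : d''/d' < 1 := by rw [div_lt_one hd'pos]; exact hd''lt
      nlinarith
    obtain ⟨v, hv1, hv2⟩ := f0.exists_lt_apply_of_lt_opNorm hrlt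
    obtain ⟨v', hv'1, hv'2⟩ : ∃ v', ‖v'‖ < 1 ∧ (d''/d') * ‖f0‖ < f0 v' := by
      rcases le_or_gt 0 (f0 v) with h | h
      · exact ⟨v, hv1, by rwa [Real.norm_eq_abs, abs_of_nonneg h] at hv2⟩
      · refine ⟨-v, by rwa [norm_neg], ?_⟩
        rw [map_neg]
        rwa [Real.norm_eq_abs, abs_of_neg h] at hv2
    have hmem : x + d' • v' ∈ Metric.ball x d' := by
      rw [Metric.mem_ball, dist_eq_norm]
      have e : ‖x + d' • v' - x‖ = d' * ‖v'‖ := by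
        simp [norm_smul, abs_of_pos hd'pos]
      rw [e]
      calc d' * ‖v'‖ < d' * 1 := by exact mul_lt_mul_of_pos_left hv'1 hd'pos
        _ = d' := mul_one d'
    have h3 := hball _ hmem
    rw [map_add, map_smul, smul_eq_mul] at h3
    have e4 : d' * ((d''/d') * ‖f0‖) = d'' * ‖f0‖ := by
      field_simp
    nlinarith [mul_lt_mul_of_pos_left hv'2 hd'pos]
  -- normalized separating functional
  set xs : X →L[ℝ] ℝ := -((‖f0‖)⁻¹ • f0) with hxsdef
  set cc : ℝ := -(u0 / ‖f0‖) with hccdef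
  have hxsapp : ∀ z : X, xs z = -(‖f0‖⁻¹ * f0 z) := by
    intro z
    rw [hxsdef]
    simp [ContinuousLinearMap.neg_apply, ContinuousLinearMap.smul_apply, smul_eq_mul]
  have hsepF : ∀ y ∈ feas f p, xs y ≤ cc := by
    intro y hy
    have h3 := hFge y hy
    rw [hxsapp y, hccdef, neg_le_neg_iff, div_eq_inv_mul]
    exact mul_le_mul_of_nonneg_left h3 (inv_nonneg.mpr (norm_nonneg _))
  have hxsnorm : ‖xs‖ = 1 := by
    rw [hxsdef, norm_neg]
    rw [show ‖(‖f0‖)⁻¹ • f0‖ = ‖(‖f0‖)⁻¹‖ * ‖f0‖ from norm_smul _ f0]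
    rw [Real.norm_eq_abs, abs_of_pos (inv_pos.mpr hf0pos)]
    field_simp
  have hxsx : d'' + cc < xs x := by
    have key : ‖f0‖⁻¹ * f0 x + d'' < u0 / ‖f0‖ := by
      rw [div_eq_inv_mul]
      have h3 := mul_lt_mul_of_pos_left hquant (inv_pos.mpr hf0pos)
      rw [mul_add] at h3
      have e2 : ‖f0‖⁻¹ * (d'' * ‖f0‖) = d'' := by
        field_simp
      linarith
    rw [hxsapp x, hccdef]
    linarith
  -- Farkas
  have hclos := farkas f p hproper hlsc hconv hrefl xh hxh' xs cc hsepF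
  set δ : ℝ := min ((d'' - ρ) / (‖x‖ + 2 + ρ)) (1/2) with hδdef
  have hK : 0 < ‖x‖ + 2 + ρ := by positivity
  have hδpos : 0 < δ := by
    rw [hδdef]
    apply lt_min
    · apply div_pos (by linarith) hK
    · norm_num
  have hδhalf : δ ≤ 1/2 := min_le_right _ _
  have hδK : δ * (‖x‖ + 2 + ρ) ≤ d'' - ρ := by
    have h3 : δ ≤ (d'' - ρ) / (‖x‖ + 2 + ρ) := min_le_left _ _
    rwa [le_div_iff₀ hK] at h3
  obtain ⟨q', hq'S, hq'close⟩ := Metric.mem_closure_iff.mp hclos δ hδpos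
  rw [Prod.dist_eq, max_lt_iff] at hq'close
  obtain ⟨hc1, hc2⟩ := hq'close
  have hd1 : ‖q'.1 - xs‖ < δ := by
    rw [dist_comm, dist_eq_norm] at hc1
    exact hc1
  have hd2 : |q'.2 - cc| < δ := by
    rw [dist_comm, Real.dist_eq] at hc2
    exact hc2
  have hup : ‖q'.1‖ ≤ 1 + δ := by
    have h3 : xs + (q'.1 - xs) = q'.1 := by abel
    calc ‖q'.1‖ = ‖xs + (q'.1 - xs)‖ := by rw [h3]
      _ ≤ ‖xs‖ + ‖q'.1 - xs‖ := norm_add_le _ _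
      _ ≤ 1 + δ := by rw [hxsnorm]; linarith
  have hlow : 1 - δ ≤ ‖q'.1‖ := by
    have h3 : q'.1 + (xs - q'.1) = xs := by abel
    have h4 : ‖xs‖ ≤ ‖q'.1‖ + ‖xs - q'.1‖ := by
      calc ‖xs‖ = ‖q'.1 + (xs - q'.1)‖ := by rw [h3]
        _ ≤ ‖q'.1‖ + ‖xs - q'.1‖ := norm_add_le _ _
    rw [hxsnorm, norm_sub_rev] at h4
    linarith
  have hq'ne : q'.1 ≠ 0 := by
    intro h0
    rw [h0, norm_zero] at hlow
    linarith
  have hq'pos : 0 < ‖q'.1‖ := norm_pos_iff.mpr hq'ne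
  -- numerator bound
  have happx : |q'.1 x - xs x| ≤ δ * ‖x‖ := by
    have h3 : q'.1 x - xs x = (q'.1 - xs) x := by
      rw [ContinuousLinearMap.sub_apply]
    have h4 := (q'.1 - xs).le_opNorm x
    rw [h3]
    calc |(q'.1 - xs) x| = ‖(q'.1 - xs) x‖ := (Real.norm_eq_abs _).symm
      _ ≤ ‖q'.1 - xs‖ * ‖x‖ := h4
      _ ≤ δ * ‖x‖ := mul_le_mul_of_nonneg_right (le_of_lt hd1) (norm_nonneg _)
  have hnum : ρ ≤ (q'.1 x - q'.2) / ‖q'.1‖ := by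
    rw [le_div_iff₀ hq'pos]
    have hb1 : q'.1 x ≥ xs x - δ * ‖x‖ := by
      have h5 := abs_le.mp happx
      linarith [h5.1, h5.2]
    have hb2 : q'.2 ≤ cc + δ := by
      have h5 := abs_le.mp (le_of_lt hd2)
      linarith [h5.1, h5.2]
    have hb3 : ρ * ‖q'.1‖ ≤ ρ + ρ * δ := by
      have h5 := mul_le_mul_of_nonneg_left hup (le_of_lt hρpos)
      rw [mul_add, mul_one] at h5
      exact h5
    have hδK' : δ * ‖x‖ + δ * 2 + δ * ρ ≤ d'' - ρ := by
      have h5 := hδK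
      rw [mul_add, mul_add] at h5
      exact h5
    linarith [hb1, hb2, hb3, hδK', hδpos, hxsx]
  have htrans := transfer f p hproper x hq'S hq'ne
  have hfinal : ENNReal.ofReal ρ ≤ RHS :=
    le_trans (ENNReal.ofReal_le_ofReal hnum) htrans
  exact lt_irrefl _ (lt_of_le_of_lt hfinal hRltρ)
end

section
/- For every x ∈ X and every p ∈ l_∞(T): dist(p; F^{−1}(x)) ≥ dist(ρ_p; F̃^{−1}(x)), where F^{−1}(x) = {q ∈ l_∞(T) : x ∈ F(q)}, F̃^{−1}(x) = {ρ ∈ l_∞(T̃) : x ∈ F̃(ρ)}, and dist(·; ∅) := +∞. -/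
open Filter
open scoped ENNReal

theorem stmt_15 {T : Type*} [Nonempty T]
    {X : Type*} [NormedAddCommGroup X] [NormedSpace ℝ X] [CompleteSpace X]
    (f : T → X → EReal)
    (hproper : ∀ t, ErealProper (f t))
    (hlsc : ∀ t, LowerSemicontinuous (f t))
    (hconv : ∀ t, ErealConvexOn (f t))
    (x : X) (p : Linf T) :
    EMetric.infEdist (rhoP f p) {ρ : Linf (Ttilde f) | x ∈ feasTilde f ρ} ≤
      EMetric.infEdist p {q : Linf T | x ∈ feas f q} := by
  refine EMetric.le_infEdist.2 ?_
  intro q hq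
  -- step 1: rhoP f q lies in the target set
  have hmem : rhoP f q ∈ {ρ : Linf (Ttilde f) | x ∈ feasTilde f ρ} := by
    intro s
    have hFY : ((s.1.2 x : ℝ) : EReal) - conj (f s.1.1) s.1.2 ≤ f s.1.1 x := by
      have htop : conj (f s.1.1) s.1.2 < ⊤ := s.2
      have hbot : conj (f s.1.1) s.1.2 ≠ ⊥ := by
        obtain ⟨x0, hx0⟩ := (hproper s.1.1).2
        have h1 : ((s.1.2 x0 : ℝ) : EReal) - f s.1.1 x0 ≤ conj (f s.1.1) s.1.2 :=
          le_iSup (fun y => ((s.1.2 y : ℝ) : EReal) - f s.1.1 y) x0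
        intro hB
        rw [hB, le_bot_iff] at h1
        have := (hproper s.1.1).1 x0
        cases hfx : f s.1.1 x0 with
        | bot => exact this hfx
        | top => exact hx0 hfx
        | coe r =>
          rw [hfx, ← EReal.coe_sub] at h1
          exact EReal.coe_ne_bot _ h1
      obtain ⟨c, hc⟩ : ∃ c : ℝ, conj (f s.1.1) s.1.2 = (c : EReal) := by
        cases hC : conj (f s.1.1) s.1.2 with
        | bot => exact absurd hC hbot
        | top => rw [hC] at htop; exact absurd htop (lt_irrefl _)
        | coe r => exact ⟨r, rfl⟩
      have h1 : ((s.1.2 x : ℝ) : EReal) - f s.1.1 x ≤ (c : EReal) := by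
        rw [← hc]; exact le_iSup (fun y => ((s.1.2 y : ℝ) : EReal) - f s.1.1 y) x
      rw [hc]
      cases hfx : f s.1.1 x with
      | bot => exact absurd hfx ((hproper s.1.1).1 x)
      | top =>
        rw [show ((s.1.2 x : ℝ) : EReal) - (c : EReal) = ((s.1.2 x - c : ℝ) : EReal) by
          exact_mod_cast rfl]
        exact le_top
      | coe r =>
        rw [hfx] at h1
        rw [show ((s.1.2 x : ℝ) : EReal) - (c : EReal) = ((s.1.2 x - c : ℝ) : EReal) by
          exact_mod_cast rfl]
        rw [show ((s.1.2 x : ℝ) : EReal) - (r : EReal) = ((s.1.2 x - r : ℝ) : EReal) by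
          exact_mod_cast rfl] at h1
        have : s.1.2 x - r ≤ c := by exact_mod_cast h1
        exact_mod_cast (by linarith : s.1.2 x - c ≤ r)
    exact hFY.trans (hq s.1.1)
  -- step 2: edist (rhoP f p) (rhoP f q) ≤ edist p q
  have hdist : edist (rhoP f p) (rhoP f q) ≤ edist p q := by
    rw [edist_dist, edist_dist]
    apply ENNReal.ofReal_le_ofReal
    rw [dist_eq_norm, dist_eq_norm]
    refine lp.norm_le_of_forall_le (norm_nonneg _) ?_
    intro s
    have h1 : (rhoP f p - rhoP f q) s = (p - q) s.1.1 := by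
      rw [lp.coeFn_sub, lp.coeFn_sub]
      rfl
    rw [h1]
    exact lp.norm_apply_le_norm ENNReal.top_ne_zero (p - q) s.1.1
  exact (EMetric.infEdist_le_edist_of_mem hmem).trans hdist
end

section
/- Let x̄ ∈ F(0). Then lip F(0, x̄) ≤ lip F̃(0, x̄), i.e., the exact Lipschitzian bound of the convex-system feasible map F at (0, x̄) does not exceed that of its linearization F̃ at (0, x̄). -/
open Filter
open scoped ENNReal

namespace Stmt16Aux
variable {X : Type*} [NormedAddCommGroup X] [NormedSpace ℝ X]

lemma conj_ne_bot {g : X → EReal} (hp : ErealProper g) (u : X →L[ℝ] ℝ) :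
    conj g u ≠ ⊥ := by
  obtain ⟨h1, y₀, h2⟩ := hp
  have hr₀ : g y₀ = ((g y₀).toReal : EReal) := (EReal.coe_toReal h2 (h1 y₀)).symm
  have : ((u y₀ - (g y₀).toReal : ℝ) : EReal) ≤ conj g u := by
    have := le_iSup (fun x => (u x : EReal) - g x) y₀
    rwa [hr₀, ← EReal.coe_sub] at this
  intro hbot
  rw [hbot, le_bot_iff] at this
  exact (EReal.coe_ne_bot _) this

lemma fy {g : X → EReal} (hp : ErealProper g) {u : X →L[ℝ] ℝ} (hu : u ∈ domConj g) (x : X) :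
    ((u x : ℝ) : EReal) - conj g u ≤ g x := by
  have hle : ((u x : ℝ) : EReal) - g x ≤ conj g u := le_iSup (fun y => (u y : EReal) - g y) x
  obtain ⟨d, hd⟩ : ∃ d : ℝ, conj g u = d :=
    ⟨_, (EReal.coe_toReal (ne_of_lt hu) (conj_ne_bot hp u)).symm⟩
  rw [hd] at hle ⊢
  rcases eq_or_ne (g x) ⊤ with h | h
  · rw [h]; exact le_top
  · obtain ⟨r, hr⟩ : ∃ r : ℝ, g x = r := ⟨_, (EReal.coe_toReal h (hp.1 x)).symm⟩
    rw [hr] at hle ⊢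
    rw [← EReal.coe_sub] at hle ⊢
    rw [EReal.coe_le_coe_iff] at hle ⊢
    linarith

lemma sep {g : X → EReal} (hp : ErealProper g) (hl : LowerSemicontinuous g)
    (hc : ErealConvexOn g) [CompleteSpace X]
    {z : X} {β : ℝ} (hz : ¬ g z ≤ (β : EReal)) :
    ∃ (u : X →L[ℝ] ℝ) (s c : ℝ), s ≤ 0 ∧
      (∀ (y : X) (r : ℝ), g y ≤ (r : EReal) → u y + r * s < c) ∧ c < u z + β * s := by
  set Epi : Set (X × ℝ) := {q | g q.1 ≤ (q.2 : EReal)} with hEpi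
  have hconvE : Convex ℝ Epi := by
    rintro ⟨y1, r1⟩ h1 ⟨y2, r2⟩ h2 a b ha hb hab
    simp only [hEpi, Set.mem_setOf_eq] at h1 h2 ⊢
    have hne1 : g y1 ≠ ⊤ := fun h => by rw [h] at h1; exact absurd (top_le_iff.mp h1) (EReal.coe_ne_top r1)
    have hne2 : g y2 ≠ ⊤ := fun h => by rw [h] at h2; exact absurd (top_le_iff.mp h2) (EReal.coe_ne_top r2)
    obtain ⟨s1, hs1⟩ : ∃ s : ℝ, g y1 = s := ⟨_, (EReal.coe_toReal hne1 (hp.1 y1)).symm⟩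
    obtain ⟨s2, hs2⟩ : ∃ s : ℝ, g y2 = s := ⟨_, (EReal.coe_toReal hne2 (hp.1 y2)).symm⟩
    have hle1 : s1 ≤ r1 := by rw [hs1, EReal.coe_le_coe_iff] at h1; exact h1
    have hle2 : s2 ≤ r2 := by rw [hs2, EReal.coe_le_coe_iff] at h2; exact h2
    have key := hc y1 y2 a b ha hb hab
    rw [hs1, hs2] at key
    have hsnd : (a • (y1, r1) + b • (y2, r2) : X × ℝ).2 = a * r1 + b * r2 := rfl
    have hfst : (a • (y1, r1) + b • (y2, r2) : X × ℝ).1 = a • y1 + b • y2 := rfl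
    rw [hfst, hsnd]
    calc g (a • y1 + b • y2) ≤ (a : EReal) * s1 + (b : EReal) * s2 := key
      _ = ((a * s1 + b * s2 : ℝ) : EReal) := by rw [← EReal.coe_mul, ← EReal.coe_mul, ← EReal.coe_add]
      _ ≤ ((a * r1 + b * r2 : ℝ) : EReal) := by
          rw [EReal.coe_le_coe_iff]
          have := mul_le_mul_of_nonneg_left hle1 ha
          have := mul_le_mul_of_nonneg_left hle2 hb
          linarith
  have hclE : IsClosed Epi := by
    rw [← isOpen_compl_iff, isOpen_iff_mem_nhds]
    rintro ⟨y, r⟩ hyr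
    simp only [hEpi, Set.mem_compl_iff, Set.mem_setOf_eq, not_le] at hyr
    obtain ⟨c', h1, h2⟩ := EReal.exists_between_coe_real hyr
    have hU : IsOpen {y' : X | (c' : EReal) < g y'} :=
      lowerSemicontinuous_iff_isOpen_preimage.mp hl (c' : EReal)
    have hr' : r < c' := by exact_mod_cast h1
    have hmem : {y' : X | (c' : EReal) < g y'} ×ˢ Set.Iio c' ∈ nhds ((y, r) : X × ℝ) :=
      prod_mem_nhds (hU.mem_nhds h2) (Iio_mem_nhds hr')
    apply mem_of_superset hmem
    rintro ⟨y', r'⟩ ⟨hy', hr''⟩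
    simp only [hEpi, Set.mem_compl_iff, Set.mem_setOf_eq, not_le]
    exact lt_trans (by exact_mod_cast hr'') hy'
  have hznot : ((z, β) : X × ℝ) ∉ Epi := hz
  obtain ⟨Φ, c, hΦ, hxc⟩ := geometric_hahn_banach_closed_point hconvE hclE hznot
  set u : X →L[ℝ] ℝ := Φ.comp (ContinuousLinearMap.inl ℝ X ℝ) with hu
  set s : ℝ := Φ (0, 1) with hs
  have hΦeq : ∀ (y : X) (r : ℝ), Φ (y, r) = u y + r * s := by
    intro y r
    have h0 : ((y, r) : X × ℝ) = (y, (0:ℝ)) + r • ((0:X), (1:ℝ)) := by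
      simp [Prod.ext_iff]
    rw [h0, map_add, map_smul]
    simp [hu, hs, smul_eq_mul]
  have hA : ∀ (y : X) (r : ℝ), g y ≤ (r : EReal) → u y + r * s < c := by
    intro y r hyr
    have := hΦ (y, r) hyr
    rwa [hΦeq] at this
  have hB : c < u z + β * s := by rw [← hΦeq]; exact hxc
  -- s ≤ 0
  obtain ⟨h1, y₀, h2⟩ := hp
  obtain ⟨r₀, hr₀⟩ : ∃ r : ℝ, g y₀ = r := ⟨_, (EReal.coe_toReal h2 (h1 y₀)).symm⟩
  have hsle : s ≤ 0 := by
    by_contra hspos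
    push_neg at hspos
    set k : ℝ := max 0 ((c - u y₀ - r₀ * s) / s) with hk
    have hk0 : 0 ≤ k := le_max_left _ _
    have hk1 : (c - u y₀ - r₀ * s) / s ≤ k := le_max_right _ _
    have hmem : g y₀ ≤ ((r₀ + k : ℝ) : EReal) := by
      rw [hr₀, EReal.coe_le_coe_iff]; linarith
    have hlt := hA y₀ (r₀ + k) hmem
    have hcancel : (c - u y₀ - r₀ * s) / s * s = c - u y₀ - r₀ * s :=
      div_mul_cancel₀ _ (ne_of_gt hspos)
    have hks : (c - u y₀ - r₀ * s) / s * s ≤ k * s :=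
      mul_le_mul_of_nonneg_right hk1 (le_of_lt hspos)
    have hexp : (r₀ + k) * s = r₀ * s + k * s := by ring
    linarith
  exact ⟨u, s, c, hsle, hA, hB⟩

lemma scale {g : X → EReal} (hp : ErealProper g) {u : X →L[ℝ] ℝ} {s c : ℝ}
    (hs : s < 0) (hA : ∀ (y : X) (r : ℝ), g y ≤ (r : EReal) → u y + r * s < c) :
    conj g ((-s)⁻¹ • u) ≤ ((c / (-s) : ℝ) : EReal) := by
  apply iSup_le
  intro y
  rcases eq_or_ne (g y) ⊤ with h | h
  · rw [h]
    simp
  · obtain ⟨ry, hry⟩ : ∃ r : ℝ, g y = r := ⟨_, (EReal.coe_toReal h (hp.1 y)).symm⟩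
    rw [hry]
    have happ : ((-s)⁻¹ • u) y = (-s)⁻¹ * u y := rfl
    rw [happ, ← EReal.coe_sub, EReal.coe_le_coe_iff]
    have hlt := hA y ry (le_of_eq hry)
    have hspos : 0 < -s := by linarith
    have hinv : (-s) * (-s)⁻¹ = 1 := mul_inv_cancel₀ (ne_of_gt hspos)
    have hinvpos : 0 < (-s)⁻¹ := inv_pos.mpr hspos
    have hsinv : s * (-s)⁻¹ = -1 := by linarith [hinv]
    have h3 := mul_lt_mul_of_pos_right hlt hinvpos
    have hexp : (u y + ry * s) * (-s)⁻¹ = u y * (-s)⁻¹ + ry * (s * (-s)⁻¹) := by ring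
    rw [hsinv] at hexp
    rw [div_eq_mul_inv]
    linarith

lemma biconj {g : X → EReal} [CompleteSpace X] (hp : ErealProper g)
    (hl : LowerSemicontinuous g) (hc : ErealConvexOn g)
    {x : X} {α : ℝ}
    (h : ∀ u ∈ domConj g, ((u x : ℝ) : EReal) - conj g u ≤ (α : EReal)) :
    g x ≤ (α : EReal) := by
  by_contra hx
  -- first get some u₀ ∈ domConj g
  obtain ⟨h1, y₀, h2⟩ := hp
  obtain ⟨r₀, hr₀⟩ : ∃ r : ℝ, g y₀ = r := ⟨_, (EReal.coe_toReal h2 (h1 y₀)).symm⟩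
  have hp' : ErealProper g := ⟨h1, y₀, h2⟩
  have hz0 : ¬ g y₀ ≤ ((r₀ - 1 : ℝ) : EReal) := by
    rw [hr₀, EReal.coe_le_coe_iff]; linarith
  obtain ⟨v, t, c₀, ht, hA0, hB0⟩ := sep hp' hl hc hz0
  have ht' : t < 0 := by
    have hlt := hA0 y₀ r₀ (le_of_eq hr₀)
    have hexp : (r₀ - 1) * t = r₀ * t - t := by ring
    linarith
  set u₀ : X →L[ℝ] ℝ := (-t)⁻¹ • v with hu₀def
  have hu₀ : conj g u₀ ≤ ((c₀ / (-t) : ℝ) : EReal) := scale hp' ht' hA0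
  have hu₀dom : u₀ ∈ domConj g := lt_of_le_of_lt hu₀ (EReal.coe_lt_top _)
  obtain ⟨d₀, hd₀⟩ : ∃ d : ℝ, conj g u₀ = d :=
    ⟨_, (EReal.coe_toReal (ne_of_lt hu₀dom) (conj_ne_bot hp' u₀)).symm⟩
  -- separation at (x, α)
  obtain ⟨u, s, c, hsle, hA, hB⟩ := sep hp' hl hc hx
  rcases lt_or_eq_of_le hsle with hs' | hs'
  · -- s < 0
    set w : X →L[ℝ] ℝ := (-s)⁻¹ • u with hwdef
    have hw : conj g w ≤ ((c / (-s) : ℝ) : EReal) := scale hp' hs' hA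
    have hwdom : w ∈ domConj g := lt_of_le_of_lt hw (EReal.coe_lt_top _)
    obtain ⟨d, hd⟩ : ∃ d : ℝ, conj g w = d :=
      ⟨_, (EReal.coe_toReal (ne_of_lt hwdom) (conj_ne_bot hp' w)).symm⟩
    have hdle : d ≤ c / (-s) := by rw [hd] at hw; exact_mod_cast hw
    have hineq := h w hwdom
    rw [hd, ← EReal.coe_sub, EReal.coe_le_coe_iff] at hineq
    have happ : w x = (-s)⁻¹ * u x := rfl
    have hspos : 0 < -s := by linarith
    have hinv : (-s) * (-s)⁻¹ = 1 := mul_inv_cancel₀ (ne_of_gt hspos)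
    have hinvpos : 0 < (-s)⁻¹ := inv_pos.mpr hspos
    have hwx : (-s) * w x = u x := by rw [happ, ← mul_assoc, hinv, one_mul]
    rw [happ] at hineq
    have h3 : (-s)⁻¹ * u x ≤ α + d := by linarith
    have h4 := mul_le_mul_of_nonneg_left h3 (le_of_lt hspos)
    have h5 : (-s) * ((-s)⁻¹ * u x) = u x := by rw [← mul_assoc, hinv, one_mul]
    rw [h5] at h4
    -- h4 : u x ≤ -s * (α + d)
    have h6 : d ≤ c / (-s) := hdle
    have h7 : (-s) * (α + d) ≤ (-s) * (α + c / (-s)) := by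
      apply mul_le_mul_of_nonneg_left _ (le_of_lt hspos)
      linarith
    have hsne : s ≠ 0 := ne_of_lt hs'
    have h8 : (-s) * (α + c / (-s)) = -s * α + c := by
      field_simp
      ring
    linarith
  · -- s = 0
    have hB' : c < u x := by rw [hs'] at hB; linarith
    have hux : 0 < u x - c := by linarith
    set n : ℝ := max 1 ((α + d₀ - u₀ x) / (u x - c) + 1) with hn
    have hn1 : 1 ≤ n := le_max_left _ _
    have hn2 : (α + d₀ - u₀ x) / (u x - c) + 1 ≤ n := le_max_right _ _
    have hn0 : 0 < n := lt_of_lt_of_le one_pos hn1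
    set w : X →L[ℝ] ℝ := u₀ + n • u with hwdef
    have hwconj : conj g w ≤ ((d₀ + n * c : ℝ) : EReal) := by
      apply iSup_le
      intro y
      rcases eq_or_ne (g y) ⊤ with hgy | hgy
      · rw [hgy]; simp
      · obtain ⟨ry, hry⟩ : ∃ r : ℝ, g y = r := ⟨_, (EReal.coe_toReal hgy (h1 y)).symm⟩
        have hconj0 : ((u₀ y : ℝ) : EReal) - g y ≤ conj g u₀ :=
          le_iSup (fun z => (u₀ z : EReal) - g z) y
        rw [hry, hd₀, ← EReal.coe_sub, EReal.coe_le_coe_iff] at hconj0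
        have huy : u y < c := by
          have h9 := hA y ry (le_of_eq hry)
          rw [hs'] at h9; linarith
        have happ : w y = u₀ y + n * u y := rfl
        rw [hry, happ, ← EReal.coe_sub, EReal.coe_le_coe_iff]
        have h10 : n * u y ≤ n * c := mul_le_mul_of_nonneg_left (le_of_lt huy) (le_of_lt hn0)
        linarith
    have hwdom : w ∈ domConj g := lt_of_le_of_lt hwconj (EReal.coe_lt_top _)
    obtain ⟨dw, hdw⟩ : ∃ d : ℝ, conj g w = d :=
      ⟨_, (EReal.coe_toReal (ne_of_lt hwdom) (conj_ne_bot hp' w)).symm⟩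
    have hdwle : dw ≤ d₀ + n * c := by rw [hdw] at hwconj; exact_mod_cast hwconj
    have hineq := h w hwdom
    rw [hdw, ← EReal.coe_sub, EReal.coe_le_coe_iff] at hineq
    have happ : w x = u₀ x + n * u x := rfl
    rw [happ] at hineq
    have hcancel : (α + d₀ - u₀ x) / (u x - c) * (u x - c) = α + d₀ - u₀ x :=
      div_mul_cancel₀ _ (ne_of_gt hux)
    have hmul : ((α + d₀ - u₀ x) / (u x - c) + 1) * (u x - c) ≤ n * (u x - c) :=
      mul_le_mul_of_nonneg_right hn2 (le_of_lt hux)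
    have hexp : n * (u x - c) = n * u x - n * c := by ring
    have hexp2 : ((α + d₀ - u₀ x) / (u x - c) + 1) * (u x - c)
        = (α + d₀ - u₀ x) / (u x - c) * (u x - c) + (u x - c) := by ring
    linarith

end Stmt16Aux


theorem stmt_16 {T : Type*} [Nonempty T]
    {X : Type*} [NormedAddCommGroup X] [NormedSpace ℝ X] [CompleteSpace X]
    (f : T → X → EReal)
    (hproper : ∀ t, ErealProper (f t))
    (hlsc : ∀ t, LowerSemicontinuous (f t))
    (hconv : ∀ t, ErealConvexOn (f t))
    (xb : X) (hxb : xb ∈ feas f 0) :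
    lipBound (feasGraph f) 0 xb ≤
      lipBound {q : Linf (Ttilde f) × X | q.2 ∈ feasTilde f q.1} 0 xb := by
  have hiff : ∀ (p : Linf T) (x : X), x ∈ feas f p ↔ x ∈ feasTilde f (rhoP f p) := by
    intro p x
    constructor
    · intro hx s
      have hrho : (rhoP f p : ∀ _ : Ttilde f, ℝ) s = p s.1.1 := rfl
      rw [hrho]
      calc ((s.1.2 x : ℝ) : EReal) - conj (f s.1.1) s.1.2 ≤ f s.1.1 x :=
            Stmt16Aux.fy (hproper _) s.2 x
        _ ≤ _ := hx s.1.1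
    · intro hx t
      exact Stmt16Aux.biconj (hproper t) (hlsc t) (hconv t)
        (fun u hu => hx ⟨(t, u), hu⟩)
  have hnorm : ∀ z u : Linf T, ‖rhoP f z - rhoP f u‖ ≤ ‖z - u‖ := by
    intro z u
    apply lp.norm_le_of_forall_le (norm_nonneg _)
    intro s
    have h1 : (↑(rhoP f z - rhoP f u) : ∀ _ : Ttilde f, ℝ) s
        = (↑(z - u) : ∀ _ : T, ℝ) s.1.1 := by
      rw [lp.coeFn_sub (rhoP f z) (rhoP f u), lp.coeFn_sub z u]
      rfl
    rw [h1]
    exact lp.norm_apply_le_norm ENNReal.top_ne_zero (z - u) s.1.1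
  have hnorm0 : ∀ z : Linf T, ‖rhoP f z‖ ≤ ‖z‖ := by
    intro z
    apply lp.norm_le_of_forall_le (norm_nonneg _)
    intro s
    exact lp.norm_apply_le_norm ENNReal.top_ne_zero z s.1.1
  apply sInf_le_sInf
  rintro cc ⟨ℓ, hℓ, hLip, rfl⟩
  refine ⟨ℓ, hℓ, ?_, rfl⟩
  obtain ⟨Ut, hUt, V, hV, hL⟩ := hLip
  obtain ⟨ε, hε, hball⟩ := Metric.mem_nhds_iff.mp hUt
  refine ⟨Metric.ball 0 ε, Metric.ball_mem_nhds 0 hε, V, hV, ?_⟩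
  intro z hz u hu y hy hzy
  have hmemU : ∀ q : Linf T, q ∈ Metric.ball (0 : Linf T) ε → rhoP f q ∈ Ut := by
    intro q hq
    apply hball
    rw [Metric.mem_ball, dist_zero_right] at hq ⊢
    exact lt_of_le_of_lt (hnorm0 q) hq
  have hzy' : (rhoP f z, y) ∈ {q : Linf (Ttilde f) × X | q.2 ∈ feasTilde f q.1} :=
    (hiff z y).mp hzy
  obtain ⟨y', hy'mem, hy'norm⟩ :=
    hL (rhoP f z) (hmemU z hz) (rhoP f u) (hmemU u hu) y hy hzy'
  refine ⟨y', (hiff u y').mpr hy'mem, ?_⟩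
  calc ‖y - y'‖ ≤ ℓ * ‖rhoP f z - rhoP f u‖ := hy'norm
    _ ≤ ℓ * ‖z - u‖ := mul_le_mul_of_nonneg_left (hnorm z u) hℓ
end

section
/- For every p ∈ l_∞(T): F(p) = { x ∈ X : ⟨u*, x⟩ − f_t*(u*) ≤ p_t for all t ∈ T and all u* ∈ rge ∂f_t }, where ∂f_t(x) = { u* ∈ X* : ⟨u*, y − x⟩ ≤ f_t(y) − f_t(x) for all y ∈ X } is the subdifferential of convex analysis and rge ∂f_t = ⋃_{x∈X} ∂f_t(x); that is, in the linearization of the convex system σ(p) the index set dom f_t* may be replaced by the range of the subdifferential of f_t. -/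
open Filter
open scoped ENNReal

section AuxEReal

/-- For real r, s and w ≠ ⊥ : (r:EReal) - w ≤ s ↔ (r - s : ℝ) ≤ w -/
lemma ereal_sub_le_coe_iff {r s : ℝ} {w : EReal} (hw : w ≠ ⊥) :
    (r : EReal) - w ≤ (s : EReal) ↔ ((r - s : ℝ) : EReal) ≤ w := by
  induction w with
  | bot => simp at hw
  | coe w =>
      rw [← EReal.coe_sub, EReal.coe_le_coe_iff, EReal.coe_le_coe_iff]
      constructor <;> intro h <;> linarith
  | top => simp [EReal.sub_top]

lemma ereal_coe_sub_le (r : ℝ) (w : EReal) (s : ℝ) (h : ((r - s : ℝ) : EReal) ≤ w) :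
    (r : EReal) - w ≤ (s : EReal) := by
  have hw : w ≠ ⊥ := by
    intro hb; rw [hb, le_bot_iff] at h; exact EReal.coe_ne_bot _ h
  exact (ereal_sub_le_coe_iff hw).2 h

end AuxEReal

section AuxConj

variable {X : Type*} [NormedAddCommGroup X] [NormedSpace ℝ X]

lemma le_conj (g : X → EReal) (u : X →L[ℝ] ℝ) (x : X) :
    (u x : EReal) - g x ≤ conj g u := le_iSup (fun x => (u x : EReal) - g x) x

/-- Fenchel–Young inequality. -/
lemma fenchel_young (g : X → EReal) (x : X) (u : X →L[ℝ] ℝ) :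
    (u x : EReal) - conj g u ≤ g x := by
  rcases eq_or_ne (conj g u) ⊤ with h | h
  · simp [h, EReal.sub_top]
  rcases eq_or_ne (g x) ⊤ with hg | hg
  · simp [hg]
  rcases eq_or_ne (g x) ⊥ with hgb | hgb
  · have : conj g u = ⊤ := top_le_iff.1 (by
      have := le_conj g u x
      rwa [hgb, EReal.coe_sub_bot] at this)
    exact absurd this h
  -- g x real
  lift g x to ℝ using ⟨hg, hgb⟩ with gx hgx
  have h1 : ((u x - gx : ℝ) : EReal) ≤ conj g u := by
    have := le_conj g u x
    rwa [← hgx, ← EReal.coe_sub] at this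
  exact ereal_coe_sub_le _ _ _ h1

end AuxConj
section AuxSep

variable {X : Type*} [NormedAddCommGroup X] [NormedSpace ℝ X]

/-- Decomposition of a functional on `X × ℝ`. -/
lemma clm_prod_decomp (f : (X × ℝ) →L[ℝ] ℝ) (y : X) (r : ℝ) :
    f (y, r) = f (y, 0) + r * f (0, 1) := by
  have h1 : (y, r) = ((y, (0:ℝ)) + ((0:X), r)) := by simp
  have h2 : ((0:X), r) = r • ((0:X), (1:ℝ)) := by simp
  rw [h1, map_add, h2, map_smul]
  simp [smul_eq_mul]

lemma ereal_mul_le_coe {a A : ℝ} {w : EReal} (ha : 0 ≤ a) (hw : w ≤ (A : EReal)) :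
    (a : EReal) * w ≤ ((a * A : ℝ) : EReal) := by
  rcases eq_or_lt_of_le ha with h0 | h0
  · rw [← h0]; simp [EReal.zero_mul]
  · rw [EReal.coe_mul]
    exact mul_le_mul_of_nonneg_left hw (by exact_mod_cast ha : (0:EReal) ≤ (a : EReal))

/-- Convexity of affine-bounded epigraph-like sets. -/
lemma convex_epi_affine (g : X → EReal) (hconv : ErealConvexOn g)
    (v : X →L[ℝ] ℝ) (μ c : ℝ) :
    Convex ℝ {q : X × ℝ | g q.1 ≤ ((v q.1 + μ * q.2 + c : ℝ) : EReal)} := by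
  intro q₁ h₁ q₂ h₂ a b ha hb hab
  simp only [Set.mem_setOf_eq] at h₁ h₂ ⊢
  have key := hconv q₁.1 q₂.1 a b ha hb hab
  have m1 : (a : EReal) * g q₁.1 ≤ ((a * (v q₁.1 + μ * q₁.2 + c) : ℝ) : EReal) :=
    ereal_mul_le_coe ha h₁
  have m2 : (b : EReal) * g q₂.1 ≤ ((b * (v q₂.1 + μ * q₂.2 + c) : ℝ) : EReal) :=
    ereal_mul_le_coe hb h₂
  have hsum := add_le_add m1 m2
  rw [← EReal.coe_add] at hsum
  have hfst : (a • q₁ + b • q₂).1 = a • q₁.1 + b • q₂.1 := rfl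
  rw [hfst]
  refine le_trans (le_trans key hsum) ?_
  rw [EReal.coe_le_coe_iff]
  have hv : v (a • q₁.1 + b • q₂.1) = a * v q₁.1 + b * v q₂.1 := by
    rw [map_add, map_smul, map_smul]; simp [smul_eq_mul]
  have hsnd : (a • q₁ + b • q₂).2 = a * q₁.2 + b * q₂.2 := rfl
  rw [hv, hsnd]
  have hb1 : b = 1 - a := by linarith
  subst hb1
  apply le_of_eq; ring

omit [NormedSpace ℝ X] in
/-- The epigraph of a lower semicontinuous function is closed. -/
lemma isClosed_epi (g : X → EReal) (hlsc : LowerSemicontinuous g) :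
    IsClosed {q : X × ℝ | g q.1 ≤ (q.2 : EReal)} := by
  rw [← isOpen_compl_iff]
  rw [isOpen_iff_mem_nhds]
  rintro ⟨y₀, r₀⟩ hq
  simp only [Set.mem_compl_iff, Set.mem_setOf_eq, not_le] at hq
  obtain ⟨β, hβ1, hβ2⟩ : ∃ β : ℝ, r₀ < β ∧ (β : EReal) < g y₀ := by
    rcases eq_or_ne (g y₀) ⊤ with ht | ht
    · exact ⟨r₀ + 1, by linarith, by rw [ht]; exact EReal.coe_lt_top _⟩
    · have hb : g y₀ ≠ ⊥ := fun h => by rw [h] at hq; exact absurd hq (by simp)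
      lift g y₀ to ℝ using ⟨ht, hb⟩ with gy hgy
      refine ⟨(r₀ + gy) / 2, ?_, ?_⟩
      · have : (r₀ : ℝ) < gy := by exact_mod_cast hq
        linarith
      · rw [EReal.coe_lt_coe_iff]
        have : (r₀ : ℝ) < gy := by exact_mod_cast hq
        linarith
  have hU := hlsc y₀ (β : EReal) hβ2
  rw [nhds_prod_eq]
  filter_upwards [Filter.prod_mem_prod hU (Iio_mem_nhds hβ1)] with q hq'
  obtain ⟨h1, h2⟩ := hq'
  simp only [Set.mem_compl_iff, Set.mem_setOf_eq, not_le]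
  exact lt_trans (EReal.coe_lt_coe_iff.2 h2) h1

end AuxSep
section AuxMoreau

variable {X : Type*} [NormedAddCommGroup X] [NormedSpace ℝ X]

lemma conj_le_coe_of_forall (g : X → EReal) (hbot : ∀ y, g y ≠ ⊥)
    (u : X →L[ℝ] ℝ) (α : ℝ) (h : ∀ y : X, ∀ gy : ℝ, g y = (gy : EReal) → u y - gy ≤ α) :
    conj g u ≤ (α : EReal) := by
  refine iSup_le fun y => ?_
  rcases eq_or_ne (g y) ⊤ with ht | ht
  · rw [ht, EReal.sub_top]; exact bot_le
  · lift g y to ℝ using ⟨ht, hbot y⟩ with gy hgy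
    rw [← EReal.coe_sub, EReal.coe_le_coe_iff]
    exact h y gy hgy.symm

lemma coe_sub_le_of_conj_le {g : X → EReal} {u : X →L[ℝ] ℝ} {α : ℝ} (h : conj g u ≤ (α : EReal))
    {y : X} {gy : ℝ} (hgy : g y = (gy : EReal)) : u y - gy ≤ α := by
  have h1 : (u y : EReal) - g y ≤ (α : EReal) := le_trans (le_conj g u y) h
  rw [hgy, ← EReal.coe_sub, EReal.coe_le_coe_iff] at h1
  exact h1

/-- Every proper lsc convex function has a continuous affine minorant. -/
lemma exists_affine_minorant (g : X → EReal) (hproper : ErealProper g)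
    (hlsc : LowerSemicontinuous g) (hconv : ErealConvexOn g) :
    ∃ u₁ : X →L[ℝ] ℝ, ∃ α₁ : ℝ, conj g u₁ ≤ (α₁ : EReal) := by
  obtain ⟨hbot, x₀, hx₀⟩ := hproper
  lift g x₀ to ℝ using ⟨hx₀, hbot x₀⟩ with r₀ hr₀
  set E : Set (X × ℝ) := {q | g q.1 ≤ (q.2 : EReal)} with hE
  have hconvE : Convex ℝ E := by
    have := convex_epi_affine g hconv 0 1 0
    simpa [hE] using this
  have hclosedE : IsClosed E := isClosed_epi g hlsc
  have hnotmem : (x₀, r₀ - 1) ∉ E := by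
    simp only [hE, Set.mem_setOf_eq, ← hr₀, not_le]
    exact_mod_cast (by linarith : r₀ - 1 < r₀)
  obtain ⟨f, u, hfE, hfx⟩ := geometric_hahn_banach_closed_point hconvE hclosedE hnotmem
  set v : X →L[ℝ] ℝ := f.comp (ContinuousLinearMap.inl ℝ X ℝ) with hv
  set s : ℝ := f (0, 1) with hs
  have hdec : ∀ y r, f (y, r) = v y + r * s := fun y r => clm_prod_decomp f y r
  have hEmem : ∀ y (gy : ℝ), g y = (gy : EReal) → (y, gy) ∈ E := by
    intro y gy hgy; simp only [hE, Set.mem_setOf_eq, hgy]; exact le_refl _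
  have hsneg : s < 0 := by
    rcases lt_trichotomy s 0 with h | h | h
    · exact h
    · exfalso
      have h1 : f (x₀, r₀) < u := hfE _ (hEmem x₀ r₀ hr₀.symm)
      have h2 : u < f (x₀, r₀ - 1) := hfx
      rw [hdec] at h1 h2
      rw [h] at h1 h2; linarith
    · exfalso
      obtain ⟨n, hn⟩ := exists_nat_gt ((u - v x₀ - r₀ * s) / s)
      have h1 : f (x₀, r₀ + n) < u := by
        apply hfE
        simp only [hE, Set.mem_setOf_eq, ← hr₀]
        exact_mod_cast (by linarith [Nat.cast_nonneg (α := ℝ) n] : r₀ ≤ r₀ + (n:ℝ))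
      rw [hdec] at h1
      have : (u - v x₀ - r₀ * s) < n * s := by
        rw [div_lt_iff₀ h] at hn; linarith [hn]
      linarith
  set t : ℝ := -s with ht
  have hpos : 0 < t := by simp [ht]; linarith
  refine ⟨t⁻¹ • v, t⁻¹ * u, ?_⟩
  apply conj_le_coe_of_forall g hbot
  intro y gy hgy
  have h1 : f (y, gy) < u := hfE _ (hEmem y gy hgy)
  rw [hdec] at h1
  have h' : v y - gy * t ≤ u := by rw [ht]; linarith
  have key : t⁻¹ * (v y - gy * t) ≤ t⁻¹ * u :=
    mul_le_mul_of_nonneg_left h' (inv_nonneg.2 hpos.le)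
  have heq : t⁻¹ * v y - gy = t⁻¹ * (v y - gy * t) := by
    field_simp
  simp only [ContinuousLinearMap.smul_apply, smul_eq_mul]
  rw [heq]; exact key

end AuxMoreau
section AuxMoreau2

variable {X : Type*} [NormedAddCommGroup X] [NormedSpace ℝ X]

/-- Separation form of Fenchel–Moreau: if `c < g x`, there is an affine minorant of `g`
strictly above `c` at `x`. -/
lemma exists_conj_lt (g : X → EReal) (hproper : ErealProper g)
    (hlsc : LowerSemicontinuous g) (hconv : ErealConvexOn g)
    {x : X} {c : ℝ} (hcx : (c : EReal) < g x) :
    ∃ u₀ : X →L[ℝ] ℝ, ∃ α : ℝ, conj g u₀ ≤ (α : EReal) ∧ c < u₀ x - α := by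
  obtain ⟨hbot, x₀, hx₀⟩ := hproper
  lift g x₀ to ℝ using ⟨hx₀, hbot x₀⟩ with r₀ hr₀
  set E : Set (X × ℝ) := {q | g q.1 ≤ (q.2 : EReal)} with hE
  have hconvE : Convex ℝ E := by
    have := convex_epi_affine g hconv 0 1 0
    simpa [hE] using this
  have hclosedE : IsClosed E := isClosed_epi g hlsc
  have hnotmem : (x, c) ∉ E := by
    simp only [hE, Set.mem_setOf_eq, not_le]; exact hcx
  obtain ⟨f, u, hfE, hfx⟩ := geometric_hahn_banach_closed_point hconvE hclosedE hnotmem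
  set v : X →L[ℝ] ℝ := f.comp (ContinuousLinearMap.inl ℝ X ℝ) with hv
  set s : ℝ := f (0, 1) with hs
  have hdec : ∀ y r, f (y, r) = v y + r * s := fun y r => clm_prod_decomp f y r
  have hEmem : ∀ y (gy : ℝ), g y = (gy : EReal) → (y, gy) ∈ E := by
    intro y gy hgy; simp only [hE, Set.mem_setOf_eq, hgy]; exact le_refl _
  have hsle : s ≤ 0 := by
    by_contra h
    push_neg at h
    obtain ⟨n, hn⟩ := exists_nat_gt ((u - v x₀ - r₀ * s) / s)
    have h1 : f (x₀, r₀ + n) < u := by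
      apply hfE
      simp only [hE, Set.mem_setOf_eq, ← hr₀]
      exact_mod_cast (by linarith [Nat.cast_nonneg (α := ℝ) n] : r₀ ≤ r₀ + (n:ℝ))
    rw [hdec] at h1
    have : (u - v x₀ - r₀ * s) < n * s := by
      rw [div_lt_iff₀ h] at hn; linarith [hn]
    linarith
  rw [hdec] at hfx
  rcases eq_or_lt_of_le hsle with hs0 | hsneg
  · -- s = 0 : use an affine minorant from properness
    obtain ⟨u₁, α₁, hu₁⟩ := exists_affine_minorant g ⟨hbot, x₀, by rw [← hr₀]; exact hx₀⟩ hlsc hconv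
    have hvd : ∀ y (gy : ℝ), g y = (gy : EReal) → v y < u := by
      intro y gy hgy
      have h1 := hfE _ (hEmem y gy hgy)
      rw [hdec] at h1
      rw [hs0, mul_zero, add_zero] at h1
      exact h1
    have hd : 0 < v x - u := by
      rw [hs0, mul_zero, add_zero] at hfx
      linarith
    set lam : ℝ := max 0 ((c + α₁ - u₁ x + 1) / (v x - u)) with hlam
    have hlam0 : 0 ≤ lam := le_max_left _ _
    have hlamd : c + α₁ - u₁ x + 1 ≤ lam * (v x - u) := by
      have h2 : (c + α₁ - u₁ x + 1) / (v x - u) ≤ lam := le_max_right _ _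
      calc c + α₁ - u₁ x + 1 = ((c + α₁ - u₁ x + 1) / (v x - u)) * (v x - u) := by
            field_simp
        _ ≤ lam * (v x - u) := by
            exact mul_le_mul_of_nonneg_right h2 hd.le
    refine ⟨u₁ + lam • v, α₁ + lam * u, ?_, ?_⟩
    · apply conj_le_coe_of_forall g hbot
      intro y gy hgy
      have h1 : u₁ y - gy ≤ α₁ := coe_sub_le_of_conj_le hu₁ hgy
      have h2 : v y < u := hvd y gy hgy
      have h3 : lam * v y ≤ lam * u := mul_le_mul_of_nonneg_left h2.le hlam0
      simp only [ContinuousLinearMap.add_apply, ContinuousLinearMap.smul_apply, smul_eq_mul]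
      linarith
    · simp only [ContinuousLinearMap.add_apply, ContinuousLinearMap.smul_apply, smul_eq_mul]
      nlinarith [hlamd]
  · -- s < 0
    set t : ℝ := -s with ht
    have hpos : 0 < t := by rw [ht]; linarith
    refine ⟨t⁻¹ • v, t⁻¹ * u, ?_, ?_⟩
    · apply conj_le_coe_of_forall g hbot
      intro y gy hgy
      have h1 : f (y, gy) < u := hfE _ (hEmem y gy hgy)
      rw [hdec] at h1
      have h' : v y - gy * t ≤ u := by rw [ht]; linarith
      have key : t⁻¹ * (v y - gy * t) ≤ t⁻¹ * u :=
        mul_le_mul_of_nonneg_left h' (inv_nonneg.2 hpos.le)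
      have heq : t⁻¹ * v y - gy = t⁻¹ * (v y - gy * t) := by
        field_simp
      simp only [ContinuousLinearMap.smul_apply, smul_eq_mul]
      rw [heq]; exact key
    · -- c < t⁻¹ * v x - t⁻¹ * u
      have h2 : u < v x - c * t := by rw [ht]; linarith
      have key : t⁻¹ * u < t⁻¹ * (v x - c * t) :=
        mul_lt_mul_of_pos_left h2 (inv_pos.2 hpos)
      have heq : t⁻¹ * (v x - c * t) = t⁻¹ * v x - c := by
        field_simp
      simp only [ContinuousLinearMap.smul_apply, smul_eq_mul]
      linarith [key, heq ▸ key]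

end AuxMoreau2
section AuxEkeland

variable {W : Type*} [NormedAddCommGroup W] [CompleteSpace W]

/-- Ekeland's variational principle (real-valued version). -/
lemma ekeland_vp (h : W → ℝ) (hlsc : LowerSemicontinuous h) (m : ℝ) (hm : ∀ y, m ≤ h y)
    (κ : ℝ) (hκ : 0 < κ) (z : W) :
    ∃ z', h z' ≤ h z ∧ κ * ‖z' - z‖ ≤ h z - h z' ∧ ∀ y, h z' ≤ h y + κ * ‖y - z'‖ := by
  set F : W → Set W := fun a => {y | h y + κ * ‖y - a‖ ≤ h a} with hF
  have self_mem : ∀ a, a ∈ F a := by intro a; simp [hF]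
  have htrans : ∀ a b y, b ∈ F a → y ∈ F b → y ∈ F a := by
    intro a b y hb hy
    simp only [hF, Set.mem_setOf_eq] at *
    have tri : ‖y - a‖ ≤ ‖y - b‖ + ‖b - a‖ := norm_sub_le_norm_sub_add_norm_sub y b a
    nlinarith [mul_le_mul_of_nonneg_left tri hκ.le]
  have hclosed : ∀ a, IsClosed (F a) := by
    intro a
    have hlsc2 : LowerSemicontinuous (fun y => h y + κ * ‖y - a‖) :=
      hlsc.add (Continuous.lowerSemicontinuous (by continuity))
    exact hlsc2.isClosed_preimage (h a)
  have hbdd : ∀ a, BddBelow (h '' F a) := fun a => ⟨m, by rintro r ⟨y, _, rfl⟩; exact hm y⟩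
  have hne : ∀ a, (h '' F a).Nonempty := fun a => ⟨h a, a, self_mem a, rfl⟩
  have step : ∀ (n : ℕ) (a : W), ∃ b, b ∈ F a ∧ h b ≤ sInf (h '' F a) + (1/2)^n := by
    intro n a
    have hlt : sInf (h '' F a) < sInf (h '' F a) + (1/2)^n := by
      have : (0:ℝ) < (1/2)^n := by positivity
      linarith
    obtain ⟨r, ⟨b, hb, rfl⟩, hr⟩ := exists_lt_of_csInf_lt (hne a) hlt
    exact ⟨b, hb, hr.le⟩
  set a : ℕ → W := fun n => Nat.rec z (fun n a => (step n a).choose) n with ha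
  have ha0 : a 0 = z := rfl
  have hastep : ∀ n, a (n+1) = (step n (a n)).choose := fun n => rfl
  have hmem : ∀ n, a (n+1) ∈ F (a n) := fun n => (step n (a n)).choose_spec.1
  have hinf : ∀ n, h (a (n+1)) ≤ sInf (h '' F (a n)) + (1/2)^n :=
    fun n => (step n (a n)).choose_spec.2
  -- telescoping bound
  have htel : ∀ n, κ * (∑ i ∈ Finset.range n, ‖a (i+1) - a i‖) ≤ h z - h (a n) := by
    intro n
    induction n with
    | zero => simp [ha0]
    | succ n ih =>
        have := hmem n
        simp only [hF, Set.mem_setOf_eq] at this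
        rw [Finset.sum_range_succ, mul_add]
        linarith
  have hcauchy : CauchySeq a := by
    apply cauchySeq_of_summable_dist
    apply summable_of_sum_range_le (c := (h z - m) / κ) (fun n => dist_nonneg)
    intro n
    have h1 := htel n
    have h2 : h z - h (a n) ≤ h z - m := by linarith [hm (a n)]
    have : κ * (∑ i ∈ Finset.range n, ‖a (i+1) - a i‖) ≤ h z - m := le_trans h1 h2
    have heq : ∀ i, dist (a i) (a (i+1)) = ‖a (i+1) - a i‖ := by
      intro i; rw [dist_eq_norm, norm_sub_rev]
    rw [Finset.sum_congr rfl (fun i _ => heq i)]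
    rw [le_div_iff₀ hκ]
    linarith [this]
  obtain ⟨z', hz'⟩ := cauchySeq_tendsto_of_complete hcauchy
  have hmono : ∀ n k, a (n + k) ∈ F (a n) := by
    intro n k
    induction k with
    | zero => exact self_mem (a n)
    | succ k ih => exact htrans _ _ _ ih (hmem (n + k))
  have hz'mem : ∀ n, z' ∈ F (a n) := by
    intro n
    apply (hclosed (a n)).mem_of_tendsto hz'
    filter_upwards [Filter.eventually_ge_atTop n] with k hk
    obtain ⟨j, rfl⟩ := Nat.exists_eq_add_of_le hk
    exact hmono n j
  have hz'0 := hz'mem 0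
  simp only [hF, Set.mem_setOf_eq, ha0] at hz'0
  refine ⟨z', by nlinarith [norm_nonneg (z' - z), hz'0], by linarith [hz'0], ?_⟩
  intro y
  by_contra hy
  push_neg at hy
  have hyF : y ∈ F z' := by
    simp only [hF, Set.mem_setOf_eq]; linarith
  have key : ∀ n : ℕ, h z' ≤ h y + (1/2)^n := by
    intro n
    have h1 : y ∈ F (a n) := htrans _ _ _ (hz'mem n) hyF
    have h2 : sInf (h '' F (a n)) ≤ h y := csInf_le (hbdd (a n)) ⟨y, h1, rfl⟩
    have h3 := hinf n
    have h4 := hz'mem (n+1)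
    simp only [hF, Set.mem_setOf_eq] at h4
    have h5 : h z' ≤ h (a (n+1)) := by nlinarith [norm_nonneg (z' - a (n+1)), h4]
    linarith
  have hle : h z' ≤ h y := by
    refine le_of_forall_pos_le_add fun ε hε => ?_
    obtain ⟨n, hn⟩ := exists_pow_lt_of_lt_one hε (by norm_num : (1/2:ℝ) < 1)
    exact (key n).trans (by linarith)
  nlinarith [norm_nonneg (y - z'), hy, mul_nonneg hκ.le (norm_nonneg (y - z'))]

end AuxEkeland
section AuxBR

variable {X : Type*} [NormedAddCommGroup X] [NormedSpace ℝ X]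

set_option maxHeartbeats 1000000 in
/-- If `g` dominates the function `gz + u₀(·-z') - κ‖·-z'‖` (with `g z' = gz`), then there is
`w` with `‖w‖ ≤ κ` and `u₀ - w ∈ ∂g(z')`. -/
lemma exists_subgrad (g : X → EReal) (hbot : ∀ y, g y ≠ ⊥) (hconv : ErealConvexOn g)
    (u₀ : X →L[ℝ] ℝ) {κ : ℝ} (hκ : 0 < κ) (z' : X) {gz : ℝ} (hgz : g z' = (gz : EReal))
    (hmin : ∀ y, ((gz + (u₀ y - u₀ z') - κ * ‖y - z'‖ : ℝ) : EReal) ≤ g y) :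
    ∃ w : X →L[ℝ] ℝ, ‖w‖ ≤ κ ∧ (u₀ - w) ∈ subdiff g z' := by
  set O : Set (X × ℝ) := {q | q.2 + κ * ‖q.1 - z'‖ < 0} with hO
  set C : Set (X × ℝ) :=
    {q | g q.1 ≤ ((u₀ q.1 + 1 * q.2 + (gz - u₀ z') : ℝ) : EReal)} with hC
  have hOopen : IsOpen O := by
    have : Continuous fun q : X × ℝ => q.2 + κ * ‖q.1 - z'‖ := by continuity
    exact isOpen_lt this continuous_const
  have hOconv : Convex ℝ O := by
    rintro ⟨y₁, r₁⟩ h₁ ⟨y₂, r₂⟩ h₂ a b ha hb hab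
    simp only [hO, Set.mem_setOf_eq] at h₁ h₂ ⊢
    have hnorm : ‖a • y₁ + b • y₂ - z'‖ ≤ a * ‖y₁ - z'‖ + b * ‖y₂ - z'‖ := by
      calc ‖a • y₁ + b • y₂ - z'‖ = ‖a • (y₁ - z') + b • (y₂ - z')‖ := by
            congr 1
            calc a • y₁ + b • y₂ - z' = a • y₁ + b • y₂ - (a + b) • z' := by
                  rw [hab, one_smul]
              _ = a • (y₁ - z') + b • (y₂ - z') := by
                  rw [add_smul, smul_sub, smul_sub]; abel
        _ ≤ ‖a • (y₁ - z')‖ + ‖b • (y₂ - z')‖ := norm_add_le _ _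
        _ = a * ‖y₁ - z'‖ + b * ‖y₂ - z'‖ := by
            rw [norm_smul, norm_smul, Real.norm_eq_abs, Real.norm_eq_abs,
              abs_of_nonneg ha, abs_of_nonneg hb]
    have hmul : κ * ‖a • y₁ + b • y₂ - z'‖ ≤ a * (κ * ‖y₁ - z'‖) + b * (κ * ‖y₂ - z'‖) := by
      nlinarith [mul_le_mul_of_nonneg_left hnorm hκ.le]
    rcases eq_or_lt_of_le ha with ha0 | ha0
    · have hb1 : b = 1 := by linarith
      simp only [← ha0, hb1, zero_smul, one_smul, zero_add, Prod.fst, Prod.snd]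
      simpa using h₂
    · have t1 : a * (r₁ + κ * ‖y₁ - z'‖) < 0 := mul_neg_of_pos_of_neg ha0 h₁
      have t2 : b * (r₂ + κ * ‖y₂ - z'‖) ≤ 0 := mul_nonpos_of_nonneg_of_nonpos hb h₂.le
      show (a • (y₁, r₁) + b • (y₂, r₂)).2 + κ * ‖(a • (y₁, r₁) + b • (y₂, r₂)).1 - z'‖ < 0
      have e1 : (a • (y₁, r₁) + b • (y₂, r₂)).2 = a * r₁ + b * r₂ := rfl
      have e2 : (a • (y₁, r₁) + b • (y₂, r₂)).1 = a • y₁ + b • y₂ := rfl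
      rw [e1, e2]
      nlinarith [hmul, t1, t2]
  have hCconv : Convex ℝ C := convex_epi_affine g hconv u₀ 1 (gz - u₀ z')
  have hdisj : Disjoint O C := by
    rw [Set.disjoint_left]
    rintro ⟨y, r⟩ hO' hC'
    simp only [hO, Set.mem_setOf_eq] at hO'
    simp only [hC, Set.mem_setOf_eq] at hC'
    have h2 := hmin y
    have : ((gz + (u₀ y - u₀ z') - κ * ‖y - z'‖ : ℝ) : EReal) ≤
        ((u₀ y + 1 * r + (gz - u₀ z') : ℝ) : EReal) := le_trans h2 hC'
    rw [EReal.coe_le_coe_iff] at this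
    linarith
  obtain ⟨f, u, hfO, hfC⟩ := geometric_hahn_banach_open hOconv hOopen hCconv hdisj
  set v : X →L[ℝ] ℝ := f.comp (ContinuousLinearMap.inl ℝ X ℝ) with hv
  set s : ℝ := f (0, 1) with hs
  have hdec : ∀ y r, f (y, r) = v y + r * s := fun y r => clm_prod_decomp f y r
  have hz'C : ((z', (0:ℝ)) : X × ℝ) ∈ C := by
    simp only [hC, Set.mem_setOf_eq, hgz]
    rw [EReal.coe_le_coe_iff]; linarith
  have hCz : u ≤ v z' := by
    have := hfC _ hz'C
    rwa [hdec, zero_mul, add_zero] at this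
  have hOz : ∀ ε : ℝ, 0 < ε → v z' + (-ε) * s < u := by
    intro ε hε
    have hmem : ((z', -ε) : X × ℝ) ∈ O := by
      simp only [hO, Set.mem_setOf_eq, sub_self, norm_zero, mul_zero, add_zero]
      linarith
    have := hfO _ hmem
    rwa [hdec] at this
  have hs0 : 0 < s := by
    rcases lt_trichotomy s 0 with h | h | h
    · exfalso
      set ε : ℝ := max 1 ((u - v z') / (-s) + 1) with hε
      have hε1 : (1:ℝ) ≤ ε := le_max_left _ _
      have hε2 : (u - v z') / (-s) + 1 ≤ ε := le_max_right _ _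
      have hεpos : 0 < ε := by linarith
      have := hOz ε hεpos
      have hns : 0 < -s := by linarith
      have h3 : (u - v z') / (-s) * (-s) = u - v z' := div_mul_cancel₀ _ hns.ne'
      nlinarith [mul_le_mul_of_nonneg_right hε2 hns.le]
    · exfalso
      have := hOz 1 one_pos
      rw [h, mul_zero, add_zero] at this
      linarith
    · exact h
  have hvzu : v z' = u := by
    have hle : v z' ≤ u := by
      refine le_of_forall_pos_le_add fun ε hε => ?_
      have := hOz (ε / s) (div_pos hε hs0)
      have h3 : ε / s * s = ε := div_mul_cancel₀ _ hs0.ne'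
      nlinarith [this]
    linarith [hCz]
  have hA : ∀ d : X, v d ≤ κ * ‖d‖ * s := by
    intro d
    have key : ∀ ε : ℝ, 0 < ε → v (z' + d) + (-(κ * ‖d‖) - ε) * s < u := by
      intro ε hε
      have hmem : ((z' + d, -(κ * ‖d‖) - ε) : X × ℝ) ∈ O := by
        simp only [hO, Set.mem_setOf_eq, add_sub_cancel_left]
        linarith
      have := hfO _ hmem
      rwa [hdec] at this
    have h4 : v (z' + d) - κ * ‖d‖ * s ≤ u := by
      refine le_of_forall_pos_le_add fun ε hε => ?_
      have := key (ε / s) (div_pos hε hs0)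
      have h3 : ε / s * s = ε := div_mul_cancel₀ _ hs0.ne'
      nlinarith [this]
    rw [map_add] at h4
    rw [← hvzu] at h4
    linarith
  set w : X →L[ℝ] ℝ := s⁻¹ • v with hw
  have hwbound : ∀ d : X, w d ≤ κ * ‖d‖ := by
    intro d
    have := hA d
    have h2 : s⁻¹ * v d ≤ s⁻¹ * (κ * ‖d‖ * s) :=
      mul_le_mul_of_nonneg_left this (inv_nonneg.2 hs0.le)
    have h3 : s⁻¹ * (κ * ‖d‖ * s) = κ * ‖d‖ := by
      field_simp
    have hwd : w d = s⁻¹ * v d := rfl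
    rw [hwd]; linarith
  refine ⟨w, ?_, ?_⟩
  · refine ContinuousLinearMap.opNorm_le_bound w hκ.le fun d => ?_
    rw [Real.norm_eq_abs]
    refine abs_le.2 ⟨?_, hwbound d⟩
    have := hwbound (-d)
    rw [map_neg, norm_neg] at this
    linarith
  · intro y
    rcases eq_or_ne (g y) ⊤ with ht | ht
    · rw [ht, hgz, EReal.top_sub_coe]; exact le_top
    · lift g y to ℝ using ⟨ht, hbot y⟩ with gy' hgy'
      rw [hgz, ← EReal.coe_sub, EReal.coe_le_coe_iff]
      have hmemC : ((y, gy' - gz + u₀ z' - u₀ y) : X × ℝ) ∈ C := by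
        show g y ≤ ((u₀ y + 1 * (gy' - gz + u₀ z' - u₀ y) + (gz - u₀ z') : ℝ) : EReal)
        rw [← hgy', EReal.coe_le_coe_iff]; linarith
      have hc := hfC _ hmemC
      rw [hdec] at hc
      rw [hvzu] at hCz
      -- u ≤ v y + (gy' - gz + u₀ z' - u₀ y) * s and v z' = u
      have hc2 : v z' ≤ v y + (gy' - gz + u₀ z' - u₀ y) * s := by
        rw [hvzu]; exact hc
      have h2 : s⁻¹ * v z' ≤ s⁻¹ * (v y + (gy' - gz + u₀ z' - u₀ y) * s) :=
        mul_le_mul_of_nonneg_left hc2 (inv_nonneg.2 hs0.le)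
      have h3 : s⁻¹ * (v y + (gy' - gz + u₀ z' - u₀ y) * s)
          = s⁻¹ * v y + (gy' - gz + u₀ z' - u₀ y) := by
        field_simp
      have hwy : w y = s⁻¹ * v y := rfl
      have hwz : w z' = s⁻¹ * v z' := rfl
      simp only [ContinuousLinearMap.sub_apply]
      rw [hwy, hwz]
      linarith

end AuxBR
section AuxKey

lemma ereal_lt_sub_iff (r s : ℝ) (w : EReal) :
    (r : EReal) < w - (s : EReal) ↔ ((r + s : ℝ) : EReal) < w := by
  induction w with
  | bot => simp [EReal.bot_sub]
  | coe w =>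
      rw [← EReal.coe_sub, EReal.coe_lt_coe_iff, EReal.coe_lt_coe_iff]
      constructor <;> intro <;> linarith
  | top => simp [EReal.top_sub_coe, ← EReal.coe_add, EReal.coe_lt_top]

lemma ereal_le_sub_iff (r s : ℝ) (w : EReal) :
    (r : EReal) ≤ w - (s : EReal) ↔ ((r + s : ℝ) : EReal) ≤ w := by
  induction w with
  | bot => simp [EReal.bot_sub]
  | coe w =>
      rw [← EReal.coe_sub, EReal.coe_le_coe_iff, EReal.coe_le_coe_iff]
      constructor <;> intro <;> linarith
  | top => simp [EReal.top_sub_coe, ← EReal.coe_add, EReal.coe_lt_top]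

lemma ereal_sub_coe_eq {w : EReal} {s b : ℝ} (h : w - (s : EReal) = (b : EReal)) :
    w = ((b + s : ℝ) : EReal) := by
  induction w with
  | bot => rw [EReal.bot_sub] at h; exact absurd h (by simp)
  | coe w =>
      rw [← EReal.coe_sub, EReal.coe_eq_coe_iff] at h
      rw [EReal.coe_eq_coe_iff]; linarith
  | top => rw [EReal.top_sub_coe] at h; exact absurd h (by simp)

variable {X : Type*} [NormedAddCommGroup X] [NormedSpace ℝ X] [CompleteSpace X]

/-- Key lemma: if all linearized inequalities indexed by the range of the subdifferential
hold at `x`, then `g x ≤ c`. -/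
lemma key_lemma (g : X → EReal) (hproper : ErealProper g)
    (hlsc : LowerSemicontinuous g) (hconv : ErealConvexOn g) (x : X) (c : ℝ)
    (hH : ∀ u ∈ ⋃ y : X, subdiff g y, (u x : EReal) - conj g u ≤ (c : EReal)) :
    g x ≤ (c : EReal) := by
  by_contra hgx
  rw [not_le] at hgx
  have hbot := hproper.1
  obtain ⟨u₀, α, hconjle, hcα⟩ := exists_conj_lt g hproper hlsc hconv hgx
  -- conj g u₀ is real
  have hconjnebot : conj g u₀ ≠ ⊥ := by
    obtain ⟨x₀, hx₀⟩ := hproper.2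
    intro hb
    have := le_conj g u₀ x₀
    rw [hb, le_bot_iff] at this
    lift g x₀ to ℝ using ⟨hx₀, hbot x₀⟩ with r₀ hr₀
    rw [← EReal.coe_sub] at this
    exact EReal.coe_ne_bot _ this
  have hconjnetop : conj g u₀ ≠ ⊤ := fun h => by
    rw [h] at hconjle; exact EReal.coe_ne_top α (top_le_iff.1 hconjle)
  lift conj g u₀ to ℝ using ⟨hconjnetop, hconjnebot⟩ with a hconja
  have haα : a ≤ α := by exact_mod_cast hconjle
  have hca : c < u₀ x - a := by linarith
  set δ : ℝ := u₀ x - a - c with hδ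
  have hδpos : 0 < δ := by linarith
  set ε : ℝ := δ / 3 with hε
  have hεpos : 0 < ε := by positivity
  -- choose z near the supremum defining the conjugate
  have hsup : ((a - ε : ℝ) : EReal) < conj g u₀ := by
    rw [← hconja, EReal.coe_lt_coe_iff]; linarith
  rw [conj, lt_iSup_iff] at hsup
  obtain ⟨z, hz⟩ := hsup
  have hgzne : g z ≠ ⊤ := by
    intro h; rw [h, EReal.sub_top] at hz; exact absurd hz (by simp)
  lift g z to ℝ using ⟨hgzne, hbot z⟩ with gzr hgzr
  rw [← EReal.coe_sub, EReal.coe_lt_coe_iff] at hz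
  -- auxiliary function h and its truncation
  set h : X → EReal := fun y => g y - (u₀ y : EReal) with hh
  have hhnebot : ∀ y, h y ≠ ⊥ := by
    intro y
    rcases eq_or_ne (g y) ⊤ with h1 | h1
    · simp [hh, h1, EReal.top_sub_coe]
    · lift g y to ℝ using ⟨h1, hbot y⟩ with gy hgy
      show (g y - (u₀ y : EReal)) ≠ ⊥
      rw [← hgy, ← EReal.coe_sub]
      exact EReal.coe_ne_bot _
  have hbound : ∀ y, ((-a : ℝ) : EReal) ≤ h y := by
    intro y
    rcases eq_or_ne (g y) ⊤ with h1 | h1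
    · simp [hh, h1, EReal.top_sub_coe, le_top]
    · lift g y to ℝ using ⟨h1, hbot y⟩ with gy hgy
      have h2 : (u₀ y : EReal) - g y ≤ (a : EReal) := le_trans (le_conj g u₀ y) hconja.ge
      rw [← hgy, ← EReal.coe_sub, EReal.coe_le_coe_iff] at h2
      show ((-a : ℝ) : EReal) ≤ g y - (u₀ y : EReal)
      rw [← hgy, ← EReal.coe_sub, EReal.coe_le_coe_iff]
      linarith
  set C : ℝ := gzr - u₀ z with hC
  have hhz : h z = (C : EReal) := by
    show g z - (u₀ z : EReal) = ((gzr - u₀ z : ℝ) : EReal)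
    rw [← hgzr, ← EReal.coe_sub]
  have hCa : C < -a + ε := by rw [hC]; linarith
  have hCa' : -a ≤ C := by
    have := hbound z; rw [hhz, EReal.coe_le_coe_iff] at this; exact this
  -- lower semicontinuity of h
  have hlsch : LowerSemicontinuous h := by
    intro y₀ c' hc'
    induction c' with
    | bot =>
        filter_upwards with y
        exact bot_lt_iff_ne_bot.2 (hhnebot y)
    | coe c' =>
        have hc' : ((c' + u₀ y₀ : ℝ) : EReal) < g y₀ :=
          (ereal_lt_sub_iff c' (u₀ y₀) (g y₀)).1 hc'
        obtain ⟨β, hβ1, hβ2⟩ : ∃ β : ℝ, c' + u₀ y₀ < β ∧ (β : EReal) < g y₀ := by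
          rcases eq_or_ne (g y₀) ⊤ with h1 | h1
          · exact ⟨c' + u₀ y₀ + 1, by linarith, by rw [h1]; exact EReal.coe_lt_top _⟩
          · lift g y₀ to ℝ using ⟨h1, hbot y₀⟩ with gy hgy
            rw [EReal.coe_lt_coe_iff] at hc'
            exact ⟨(c' + u₀ y₀ + gy) / 2, by linarith, by
              rw [EReal.coe_lt_coe_iff]; linarith⟩
        have hU1 := hlsc y₀ (β : EReal) hβ2
        have hU2 : ∀ᶠ y in nhds y₀, u₀ y < β - c' := by
          have hopen : IsOpen {y : X | u₀ y < β - c'} :=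
            isOpen_lt u₀.continuous continuous_const
          exact hopen.mem_nhds (show u₀ y₀ < β - c' by linarith)
        filter_upwards [hU1, hU2] with y hy1 hy2
        show ((c' : ℝ) : EReal) < g y - (u₀ y : EReal)
        rw [ereal_lt_sub_iff]
        exact lt_trans (by rw [EReal.coe_lt_coe_iff]; linarith) hy1
    | top => exact absurd hc' (by simp)
  -- truncation
  set ht : X → ℝ := fun y => (min (h y) ((C + 1 : ℝ) : EReal)).toReal with hht
  have hmreal : ∀ y, min (h y) ((C + 1 : ℝ) : EReal) = ((ht y : ℝ) : EReal) := by
    intro y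
    have h1 : min (h y) ((C + 1 : ℝ) : EReal) ≠ ⊤ :=
      fun hh' => EReal.coe_ne_top _ (top_le_iff.1 (hh' ▸ min_le_right _ _))
    have h2 : min (h y) ((C + 1 : ℝ) : EReal) ≠ ⊥ := by
      have := le_min (hbound y) (show ((-a:ℝ):EReal) ≤ ((C+1:ℝ):EReal) by
        rw [EReal.coe_le_coe_iff]; linarith)
      intro hh'
      rw [hh', le_bot_iff] at this
      exact EReal.coe_ne_bot _ this
    rw [hht]
    exact (EReal.coe_toReal h1 h2).symm
  have htlb : ∀ y, -a ≤ ht y := by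
    intro y
    have := le_min (hbound y) (show ((-a:ℝ):EReal) ≤ ((C+1:ℝ):EReal) by
      rw [EReal.coe_le_coe_iff]; linarith)
    rw [hmreal y, EReal.coe_le_coe_iff] at this
    exact this
  have htz : ht z = C := by
    have : min (h z) ((C + 1 : ℝ) : EReal) = ((C:ℝ) : EReal) := by
      rw [hhz, min_eq_left (by rw [EReal.coe_le_coe_iff]; linarith)]
    rw [hmreal z] at this
    exact_mod_cast this
  have htle : ∀ y, ((ht y : ℝ) : EReal) ≤ h y := fun y => (hmreal y) ▸ min_le_left _ _
  have hlscht : LowerSemicontinuous ht := by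
    intro y₀ t ht'
    have h1 : (t : EReal) < min (h y₀) ((C + 1 : ℝ) : EReal) := by
      rw [hmreal y₀, EReal.coe_lt_coe_iff]; exact ht'
    have h2 : (t : EReal) < h y₀ := lt_of_lt_of_le h1 (min_le_left _ _)
    have h3 : t < C + 1 := by
      have := lt_of_lt_of_le h1 (min_le_right _ _)
      exact_mod_cast this
    filter_upwards [hlsch y₀ (t : EReal) h2] with y hy
    have h4 : (t : EReal) < min (h y) ((C + 1 : ℝ) : EReal) :=
      lt_min hy (by rw [EReal.coe_lt_coe_iff]; exact h3)
    rw [hmreal y, EReal.coe_lt_coe_iff] at h4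
    exact h4
  -- Ekeland
  set lam : ℝ := ‖x - z‖ + 1 with hlam
  have hlampos : 0 < lam := by positivity
  set κ : ℝ := ε / lam with hκdef
  have hκpos : 0 < κ := by positivity
  obtain ⟨z', hz'1, hz'2, hz'3⟩ :=
    ekeland_vp ht hlscht (min (-a) (C+1)) (fun y => le_trans (min_le_left _ _) (htlb y))
      κ hκpos z
  rw [htz] at hz'1 hz'2
  -- h z' is real and equals ht z'
  have hz'real : h z' = ((ht z' : ℝ) : EReal) := by
    rcases le_total (h z') (((C + 1 : ℝ) : EReal)) with h1 | h1
    · rw [← hmreal z', min_eq_left h1]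
    · exfalso
      have h2 := hmreal z'
      rw [min_eq_right h1] at h2
      have : C + 1 = ht z' := by exact_mod_cast h2
      linarith
  -- g z' is real
  have hgz' : g z' = ((ht z' + u₀ z' : ℝ) : EReal) := ereal_sub_coe_eq hz'real
  -- distance bound
  have hdist : ‖z' - z‖ ≤ lam := by
    have h1 : C - ht z' ≤ ε := by linarith [htlb z']
    have h2 : κ * ‖z' - z‖ ≤ ε := le_trans hz'2 h1
    rw [hκdef] at h2
    rw [div_mul_eq_mul_div, div_le_iff₀ hlampos] at h2
    nlinarith [hεpos, hlampos]
  -- the minimization property transferred to h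
  have hmin : ∀ y, (((ht z' + u₀ z') + (u₀ y - u₀ z') - κ * ‖y - z'‖ : ℝ) : EReal) ≤ g y := by
    intro y
    have h1 : ht z' - κ * ‖y - z'‖ ≤ ht y := by linarith [hz'3 y]
    have h2 : ((ht z' - κ * ‖y - z'‖ : ℝ) : EReal) ≤ h y :=
      le_trans (by rw [EReal.coe_le_coe_iff]; exact h1) (htle y)
    rw [show h y = g y - (u₀ y : EReal) from rfl, ereal_le_sub_iff] at h2
    refine le_trans (by rw [EReal.coe_le_coe_iff]; linarith) h2
  -- extract subgradient
  obtain ⟨w, hwnorm, hwsub⟩ :=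
    exists_subgrad g hbot hconv u₀ hκpos z' hgz' hmin
  -- apply the hypothesis
  have hmem : (u₀ - w) ∈ ⋃ y : X, subdiff g y := Set.mem_iUnion.2 ⟨z', hwsub⟩
  have hHu := hH (u₀ - w) hmem
  -- conjugate bound
  have hconj' : conj g (u₀ - w) ≤ (((u₀ - w) z' - (ht z' + u₀ z') : ℝ) : EReal) := by
    apply conj_le_coe_of_forall g hbot
    intro y gy hgy
    have := hwsub y
    rw [hgy, hgz', ← EReal.coe_sub, EReal.coe_le_coe_iff] at this
    linarith
  have hfinal : (((u₀ - w) x - ((u₀ - w) z' - (ht z' + u₀ z')) : ℝ) : EReal) ≤ (c : EReal) := by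
    refine le_trans ?_ hHu
    rw [show (((u₀ - w) x : ℝ) : EReal) - conj g (u₀ - w)
        = ((u₀ - w) x : EReal) - conj g (u₀ - w) from rfl]
    rw [EReal.coe_sub]
    exact EReal.sub_le_sub (le_refl _) hconj'
  rw [EReal.coe_le_coe_iff] at hfinal
  -- final computation
  have hwx : (u₀ - w) x = u₀ x - w x := rfl
  have hwz : (u₀ - w) z' = u₀ z' - w z' := rfl
  have hwb : w x - w z' ≤ κ * ‖x - z'‖ := by
    have h1 : w (x - z') ≤ ‖w‖ * ‖x - z'‖ := le_trans (le_abs_self _)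
      (by rw [← Real.norm_eq_abs]; exact w.le_opNorm _)
    have h2 : ‖w‖ * ‖x - z'‖ ≤ κ * ‖x - z'‖ :=
      mul_le_mul_of_nonneg_right hwnorm (norm_nonneg _)
    have h3 : w (x - z') = w x - w z' := by rw [map_sub]
    linarith
  have hnormb : ‖x - z'‖ ≤ ‖x - z‖ + lam := by
    calc ‖x - z'‖ ≤ ‖x - z‖ + ‖z - z'‖ := norm_sub_le_norm_sub_add_norm_sub x z z'
      _ ≤ ‖x - z‖ + lam := by
          have h5 : ‖z - z'‖ = ‖z' - z‖ := norm_sub_rev _ _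
          linarith [hdist, h5]
  have hκb : κ * ‖x - z'‖ ≤ 2 * ε := by
    have h1 : κ * ‖x - z'‖ ≤ κ * (‖x - z‖ + lam) :=
      mul_le_mul_of_nonneg_left hnormb hκpos.le
    have h2 : ‖x - z‖ + lam ≤ 2 * lam := by rw [hlam]; linarith [norm_nonneg (x - z)]
    have h3 : κ * (‖x - z‖ + lam) ≤ κ * (2 * lam) := mul_le_mul_of_nonneg_left h2 hκpos.le
    have h4 : κ * (2 * lam) = 2 * ε := by
      rw [hκdef]; field_simp
    linarith
  have hta := htlb z'
  rw [hwx, hwz] at hfinal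
  -- hfinal : u₀ x - w x - (u₀ z' - w z' - (ht z' + u₀ z')) ≤ c
  have : u₀ x - (w x - w z') + ht z' ≤ c := by linarith [hfinal]
  have hεδ : ε = (u₀ x - a - c) / 3 := rfl
  linarith [hwb, hκb, hta, this, hεδ]

end AuxKey
theorem stmt_18 {T : Type*} [Nonempty T]
    {X : Type*} [NormedAddCommGroup X] [NormedSpace ℝ X] [CompleteSpace X]
    (f : T → X → EReal)
    (hproper : ∀ t, ErealProper (f t))
    (hlsc : ∀ t, LowerSemicontinuous (f t))
    (hconv : ∀ t, ErealConvexOn (f t))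
    (p : Linf T) :
    feas f p = {x : X | ∀ t : T, ∀ u ∈ ⋃ y : X, subdiff (f t) y,
      (u x : EReal) - conj (f t) u ≤ ((p t : ℝ) : EReal)} := by
  ext x
  simp only [feas, Set.mem_setOf_eq]
  constructor
  · intro hx t u _
    exact le_trans (fenchel_young (f t) x u) (hx t)
  · intro hx t
    exact key_lemma (f t) (hproper t) (hlsc t) (hconv t) x (p t) (hx t)
end
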